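/- Let H be a dual quasi-Hopf algebra with bijective antipode s, and define U ∈ (H⊗H)* by U(a,b) = g(a₁,b₁)q^R(s(b₂),s(a₂)) where g is the inverse Drinfeld twist and q^R(a,b) = σ(a,b₃,s⁻¹(b₁))α(s⁻¹(b₂)). Then U(a,b₁)s(b₂) = s(a₁b₁)U(a₂,b₂)a₃ for all a,b ∈ H. -/

import Mathlib

open TensorProduct

noncomputable section

namespace DQH

/-- Iterated comultiplication, 3 legs, right-nested. -/
def cD3 {k H : Type} [Field k] [AddCommGroup H] [Module k H]
    (Δ : H →ₗ[k] H ⊗[k] H) (a : H) : H ⊗[k] (H ⊗[k] H) :=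
  (TensorProduct.map LinearMap.id Δ) (Δ a)

/-- Iterated comultiplication, 4 legs, right-nested. -/
def cD4 {k H : Type} [Field k] [AddCommGroup H] [Module k H]
    (Δ : H →ₗ[k] H ⊗[k] H) (a : H) : H ⊗[k] (H ⊗[k] (H ⊗[k] H)) :=
  (TensorProduct.map LinearMap.id (TensorProduct.map LinearMap.id Δ)) (cD3 Δ a)

/-- Iterated comultiplication, 5 legs, right-nested. -/
def cD5 {k H : Type} [Field k] [AddCommGroup H] [Module k H]
    (Δ : H →ₗ[k] H ⊗[k] H) (a : H) : H ⊗[k] (H ⊗[k] (H ⊗[k] (H ⊗[k] H))) :=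
  (TensorProduct.map LinearMap.id (TensorProduct.map LinearMap.id
    (TensorProduct.map LinearMap.id Δ))) (cD4 Δ a)

/-- Iterated comultiplication, 6 legs, right-nested. -/
def cD6 {k H : Type} [Field k] [AddCommGroup H] [Module k H]
    (Δ : H →ₗ[k] H ⊗[k] H) (a : H) : H ⊗[k] (H ⊗[k] (H ⊗[k] (H ⊗[k] (H ⊗[k] H)))) :=
  (TensorProduct.map LinearMap.id (TensorProduct.map LinearMap.id
    (TensorProduct.map LinearMap.id (TensorProduct.map LinearMap.id Δ)))) (cD5 Δ a)

/-- A dual quasi-bialgebra over a field `k`: a coassociative coalgebra `(H, comul, counit)`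
together with coalgebra morphisms `mul` (multiplication) and a unit `one`, and a
convolution-invertible reassociator `sigma ∈ (H⊗H⊗H)^*` (with inverse `sigmaInv`),
satisfying the dual quasi-bialgebra axioms.  Sweedler sums are expressed by quantifying over
finite presentations of the (iterated) comultiplications as sums of pure tensors. -/
structure DualQuasiBialgebra (k H : Type) [Field k] [AddCommGroup H] [Module k H] where
  comul : H →ₗ[k] H ⊗[k] H
  counit : H →ₗ[k] k
  coassoc : ∀ a : H,
    (TensorProduct.assoc k H H H) ((TensorProduct.map comul LinearMap.id) (comul a)) =
      (TensorProduct.map LinearMap.id comul) (comul a)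
  counit_left : ∀ a : H,
    (TensorProduct.lid k H) ((TensorProduct.map counit LinearMap.id) (comul a)) = a
  counit_right : ∀ a : H,
    (TensorProduct.rid k H) ((TensorProduct.map LinearMap.id counit) (comul a)) = a
  mul : H →ₗ[k] H →ₗ[k] H
  one : H
  one_mul : ∀ a : H, mul one a = a
  mul_one : ∀ a : H, mul a one = a
  counit_one : counit one = 1
  comul_one : comul one = one ⊗ₜ[k] one
  counit_mul : ∀ a b : H, counit (mul a b) = counit a * counit b
  comul_mul : ∀ (a b : H) (sa sb : Finset ℕ) (a1 a2 b1 b2 : ℕ → H),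
    comul a = ∑ i ∈ sa, a1 i ⊗ₜ[k] a2 i →
    comul b = ∑ j ∈ sb, b1 j ⊗ₜ[k] b2 j →
    comul (mul a b) = ∑ i ∈ sa, ∑ j ∈ sb, mul (a1 i) (b1 j) ⊗ₜ[k] mul (a2 i) (b2 j)
  sigma : H →ₗ[k] H →ₗ[k] H →ₗ[k] k
  sigmaInv : H →ₗ[k] H →ₗ[k] H →ₗ[k] k
  sigma_sigmaInv : ∀ (a b c : H) (sa sb sc : Finset ℕ) (a1 a2 b1 b2 c1 c2 : ℕ → H),
    comul a = ∑ i ∈ sa, a1 i ⊗ₜ[k] a2 i →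
    comul b = ∑ j ∈ sb, b1 j ⊗ₜ[k] b2 j →
    comul c = ∑ l ∈ sc, c1 l ⊗ₜ[k] c2 l →
    ∑ i ∈ sa, ∑ j ∈ sb, ∑ l ∈ sc,
        sigma (a1 i) (b1 j) (c1 l) * sigmaInv (a2 i) (b2 j) (c2 l) =
      counit a * counit b * counit c
  sigmaInv_sigma : ∀ (a b c : H) (sa sb sc : Finset ℕ) (a1 a2 b1 b2 c1 c2 : ℕ → H),
    comul a = ∑ i ∈ sa, a1 i ⊗ₜ[k] a2 i →
    comul b = ∑ j ∈ sb, b1 j ⊗ₜ[k] b2 j →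
    comul c = ∑ l ∈ sc, c1 l ⊗ₜ[k] c2 l →
    ∑ i ∈ sa, ∑ j ∈ sb, ∑ l ∈ sc,
        sigmaInv (a1 i) (b1 j) (c1 l) * sigma (a2 i) (b2 j) (c2 l) =
      counit a * counit b * counit c
  -- (1a) : a₁(b₁c₁)σ(a₂,b₂,c₂) = σ(a₁,b₁,c₁)(a₂b₂)c₂
  quasi_assoc : ∀ (a b c : H) (sa sb sc : Finset ℕ) (a1 a2 b1 b2 c1 c2 : ℕ → H),
    comul a = ∑ i ∈ sa, a1 i ⊗ₜ[k] a2 i →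
    comul b = ∑ j ∈ sb, b1 j ⊗ₜ[k] b2 j →
    comul c = ∑ l ∈ sc, c1 l ⊗ₜ[k] c2 l →
    ∑ i ∈ sa, ∑ j ∈ sb, ∑ l ∈ sc,
        sigma (a2 i) (b2 j) (c2 l) • mul (a1 i) (mul (b1 j) (c1 l)) =
      ∑ i ∈ sa, ∑ j ∈ sb, ∑ l ∈ sc,
        sigma (a1 i) (b1 j) (c1 l) • mul (mul (a2 i) (b2 j)) (c2 l)
  -- (1c) : σ(a₁,b₁,c₁d₁)σ(a₂b₂,c₂,d₂) = σ(b₁,c₁,d₁)σ(a₁,b₂c₂,d₂)σ(a₂,b₃,c₃)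
  pentagon : ∀ (a b c d : H) (sa sb sc sd sb3 sc3 : Finset ℕ)
      (a1 a2 b1 b2 c1 c2 d1 d2 b1' b2' b3' c1' c2' c3' : ℕ → H),
    comul a = ∑ i ∈ sa, a1 i ⊗ₜ[k] a2 i →
    comul b = ∑ j ∈ sb, b1 j ⊗ₜ[k] b2 j →
    comul c = ∑ l ∈ sc, c1 l ⊗ₜ[k] c2 l →
    comul d = ∑ r ∈ sd, d1 r ⊗ₜ[k] d2 r →
    cD3 comul b = ∑ j ∈ sb3, b1' j ⊗ₜ[k] (b2' j ⊗ₜ[k] b3' j) →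
    cD3 comul c = ∑ l ∈ sc3, c1' l ⊗ₜ[k] (c2' l ⊗ₜ[k] c3' l) →
    ∑ i ∈ sa, ∑ j ∈ sb, ∑ l ∈ sc, ∑ r ∈ sd,
        sigma (a1 i) (b1 j) (mul (c1 l) (d1 r)) * sigma (mul (a2 i) (b2 j)) (c2 l) (d2 r) =
      ∑ i ∈ sa, ∑ j ∈ sb3, ∑ l ∈ sc3, ∑ r ∈ sd,
        sigma (b1' j) (c1' l) (d1 r) * sigma (a1 i) (mul (b2' j) (c2' l)) (d2 r) *
          sigma (a2 i) (b3' j) (c3' l)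
  -- (1d) : σ(a,1,b) = ε(a)ε(b)
  sigma_one_mid : ∀ a b : H, sigma a one b = counit a * counit b

/-- A dual quasi-Hopf algebra: a dual quasi-bialgebra together with a coalgebra
anti-morphism `antipode` and functionals `alpha, beta ∈ H^*` satisfying the antipode axioms. -/
structure DualQuasiHopfAlgebra (k H : Type) [Field k] [AddCommGroup H] [Module k H]
    extends DualQuasiBialgebra k H where
  antipode : H →ₗ[k] H
  comul_antipode : ∀ (a : H) (sa : Finset ℕ) (a1 a2 : ℕ → H),
    comul a = ∑ i ∈ sa, a1 i ⊗ₜ[k] a2 i →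
    comul (antipode a) = ∑ i ∈ sa, antipode (a2 i) ⊗ₜ[k] antipode (a1 i)
  counit_antipode : ∀ a : H, counit (antipode a) = counit a
  alpha : H →ₗ[k] k
  beta : H →ₗ[k] k
  -- (1e) : s(h₁)α(h₂)h₃ = α(h)1
  antipode_alpha : ∀ (a : H) (sa : Finset ℕ) (a1 a2 a3 : ℕ → H),
    cD3 comul a = ∑ i ∈ sa, a1 i ⊗ₜ[k] (a2 i ⊗ₜ[k] a3 i) →
    ∑ i ∈ sa, alpha (a2 i) • mul (antipode (a1 i)) (a3 i) = alpha a • one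
  -- (1e) : h₁β(h₂)s(h₃) = β(h)1
  antipode_beta : ∀ (a : H) (sa : Finset ℕ) (a1 a2 a3 : ℕ → H),
    cD3 comul a = ∑ i ∈ sa, a1 i ⊗ₜ[k] (a2 i ⊗ₜ[k] a3 i) →
    ∑ i ∈ sa, beta (a2 i) • mul (a1 i) (antipode (a3 i)) = beta a • one
  -- (1f) : σ(h₁β(h₂), s(h₃), α(h₄)h₅) = ε(h)
  sigma_antipode : ∀ (a : H) (sa : Finset ℕ) (a1 a2 a3 a4 a5 : ℕ → H),
    cD5 comul a = ∑ i ∈ sa, a1 i ⊗ₜ[k] (a2 i ⊗ₜ[k] (a3 i ⊗ₜ[k] (a4 i ⊗ₜ[k] a5 i))) →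
    ∑ i ∈ sa, beta (a2 i) * alpha (a4 i) * sigma (a1 i) (antipode (a3 i)) (a5 i) = counit a
  -- (1f) : σ⁻¹(s(h₁), α(h₂)h₃, β(h₄)s(h₅)) = ε(h)
  sigmaInv_antipode : ∀ (a : H) (sa : Finset ℕ) (a1 a2 a3 a4 a5 : ℕ → H),
    cD5 comul a = ∑ i ∈ sa, a1 i ⊗ₜ[k] (a2 i ⊗ₜ[k] (a3 i ⊗ₜ[k] (a4 i ⊗ₜ[k] a5 i))) →
    ∑ i ∈ sa, alpha (a2 i) * beta (a4 i) *
      sigmaInv (antipode (a1 i)) (a3 i) (antipode (a5 i)) = counit a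

variable {k H : Type} [Field k] [AddCommGroup H] [Module k H]

/-- `(M, coact)` is a left `H`-comodule. -/
def IsComodule (B : DualQuasiBialgebra k H) {M : Type} [AddCommGroup M] [Module k M]
    (coact : M →ₗ[k] H ⊗[k] M) : Prop :=
  (∀ m : M, (TensorProduct.assoc k H H M)
      ((TensorProduct.map B.comul LinearMap.id) (coact m)) =
      (TensorProduct.map LinearMap.id coact) (coact m)) ∧
  (∀ m : M, (TensorProduct.lid k M)
      ((TensorProduct.map B.counit LinearMap.id) (coact m)) = m)

/-- `cweight coact φ m = φ(m₍₋₁₎) • m₍₀₎`. -/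
def cweight {M : Type} [AddCommGroup M] [Module k M]
    (coact : M →ₗ[k] H ⊗[k] M) (φ : H →ₗ[k] k) : M →ₗ[k] M :=
  (TensorProduct.lid k M).toLinearMap ∘ₗ (TensorProduct.map φ LinearMap.id) ∘ₗ coact

/-- Diagonal coaction on the tensor product of two left comodules:
`(m ⊗ n) ↦ m₍₋₁₎n₍₋₁₎ ⊗ (m₍₀₎ ⊗ n₍₀₎)`. -/
def coactTensor (B : DualQuasiBialgebra k H) {M N : Type}
    [AddCommGroup M] [Module k M] [AddCommGroup N] [Module k N]
    (cM : M →ₗ[k] H ⊗[k] M) (cN : N →ₗ[k] H ⊗[k] N) :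
    (M ⊗[k] N) →ₗ[k] H ⊗[k] (M ⊗[k] N) :=
  (TensorProduct.map (TensorProduct.lift B.mul) LinearMap.id) ∘ₗ
    (TensorProduct.tensorTensorTensorComm k H M H N).toLinearMap ∘ₗ
      (TensorProduct.map cM cN)

/-- `sigma` as a linear functional on `(H ⊗ H) ⊗ H`. -/
def sigma3 (B : DualQuasiBialgebra k H) : (H ⊗[k] H) ⊗[k] H →ₗ[k] k :=
  TensorProduct.lift (TensorProduct.lift B.sigma)

/-- `sigmaInv` as a linear functional on `(H ⊗ H) ⊗ H`. -/
def sigmaInv3 (B : DualQuasiBialgebra k H) : (H ⊗[k] H) ⊗[k] H →ₗ[k] k :=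
  TensorProduct.lift (TensorProduct.lift B.sigmaInv)

/-- `sigma` as a linear functional on `H ⊗ (H ⊗ H)`. -/
def sigma3R (B : DualQuasiBialgebra k H) : H ⊗[k] (H ⊗[k] H) →ₗ[k] k :=
  sigma3 B ∘ₗ (TensorProduct.assoc k H H H).symm.toLinearMap

/-- The associativity constraint of the monoidal category of left `H`-comodules:
`a((m⊗n)⊗p) = σ⁻¹(m₍₋₁₎,n₍₋₁₎,p₍₋₁₎) m₍₀₎ ⊗ (n₍₀₎ ⊗ p₍₀₎)`. -/
def assocMap (B : DualQuasiBialgebra k H) {M N P : Type}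
    [AddCommGroup M] [Module k M] [AddCommGroup N] [Module k N] [AddCommGroup P] [Module k P]
    (cM : M →ₗ[k] H ⊗[k] M) (cN : N →ₗ[k] H ⊗[k] N) (cP : P →ₗ[k] H ⊗[k] P) :
    (M ⊗[k] N) ⊗[k] P →ₗ[k] M ⊗[k] (N ⊗[k] P) :=
  (TensorProduct.lid k (M ⊗[k] (N ⊗[k] P))).toLinearMap ∘ₗ
    (TensorProduct.map (sigmaInv3 B) (TensorProduct.assoc k M N P).toLinearMap) ∘ₗ
      (TensorProduct.tensorTensorTensorComm k (H ⊗[k] H) (M ⊗[k] N) H P).toLinearMap ∘ₗ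
        (TensorProduct.map (TensorProduct.tensorTensorTensorComm k H M H N).toLinearMap
          LinearMap.id) ∘ₗ
          (TensorProduct.map (TensorProduct.map cM cN) cP)

/-- The inverse associativity constraint of the monoidal category of left `H`-comodules:
`a⁻¹(m⊗(n⊗p)) = σ(m₍₋₁₎,n₍₋₁₎,p₍₋₁₎) (m₍₀₎ ⊗ n₍₀₎) ⊗ p₍₀₎`. -/
def assocInvMap (B : DualQuasiBialgebra k H) {M N P : Type}
    [AddCommGroup M] [Module k M] [AddCommGroup N] [Module k N] [AddCommGroup P] [Module k P]
    (cM : M →ₗ[k] H ⊗[k] M) (cN : N →ₗ[k] H ⊗[k] N) (cP : P →ₗ[k] H ⊗[k] P) :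
    M ⊗[k] (N ⊗[k] P) →ₗ[k] (M ⊗[k] N) ⊗[k] P :=
  (TensorProduct.lid k ((M ⊗[k] N) ⊗[k] P)).toLinearMap ∘ₗ
    (TensorProduct.map (sigma3R B) (TensorProduct.assoc k M N P).symm.toLinearMap) ∘ₗ
      (TensorProduct.tensorTensorTensorComm k H M (H ⊗[k] H) (N ⊗[k] P)).toLinearMap ∘ₗ
        (TensorProduct.map LinearMap.id
          (TensorProduct.tensorTensorTensorComm k H N H P).toLinearMap) ∘ₗ
          (TensorProduct.map cM (TensorProduct.map cN cP))

/-- The pre-braiding of the category of left-left Yetter-Drinfeld modules: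
`c_{N,M}(n ⊗ m) = n₍₋₁₎ · m ⊗ n₍₀₎`. -/
def ydBraiding {M N : Type}
    [AddCommGroup M] [Module k M] [AddCommGroup N] [Module k N]
    (actM : H →ₗ[k] M →ₗ[k] M) (cN : N →ₗ[k] H ⊗[k] N) :
    N ⊗[k] M →ₗ[k] M ⊗[k] N :=
  (TensorProduct.map (TensorProduct.lift actM) LinearMap.id) ∘ₗ
    (TensorProduct.assoc k H M N).symm.toLinearMap ∘ₗ
      (TensorProduct.map LinearMap.id (TensorProduct.comm k N M).toLinearMap) ∘ₗ
        (TensorProduct.assoc k H N M).toLinearMap ∘ₗ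
          (TensorProduct.map cN LinearMap.id)

/-- `(M, coact, act)` is a left-left Yetter-Drinfeld module over the dual quasi-bialgebra `B`:
`M` is a left `H`-comodule, `act` is a (not necessarily associative) left `H`-action with
`1 · m = m`, satisfying the quasi-associativity axiom (YD1)
`σ(h₁,g₁,m₍₋₁₎)σ((h₂g₂·m₍₀₎)₍₋₁₎,h₃,g₃)(h₂g₂·m₍₀₎)₍₀₎ = σ(h₁,(g₁·m)₍₋₁₎,g₂) h₂·(g₁·m)₍₀₎`
and the compatibility axiom (YD3)
`h₁m₍₋₁₎ ⊗ h₂·m₍₀₎ = (h₁·m)₍₋₁₎h₂ ⊗ (h₁·m)₍₀₎`. -/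
structure IsYetterDrinfeld (B : DualQuasiBialgebra k H) {M : Type}
    [AddCommGroup M] [Module k M]
    (coact : M →ₗ[k] H ⊗[k] M) (act : H →ₗ[k] M →ₗ[k] M) : Prop where
  comodule : IsComodule B coact
  one_act : ∀ m : M, act B.one m = m
  yd1 : ∀ (h g : H) (m : M) (sh3 sg3 sh sg sm : Finset ℕ)
      (h1 h2 h3 g1 g2 g3 h1' h2' g1' g2' m1 : ℕ → H) (m0 : ℕ → M),
    cD3 B.comul h = ∑ i ∈ sh3, h1 i ⊗ₜ[k] (h2 i ⊗ₜ[k] h3 i) →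
    cD3 B.comul g = ∑ j ∈ sg3, g1 j ⊗ₜ[k] (g2 j ⊗ₜ[k] g3 j) →
    B.comul h = ∑ i ∈ sh, h1' i ⊗ₜ[k] h2' i →
    B.comul g = ∑ j ∈ sg, g1' j ⊗ₜ[k] g2' j →
    coact m = ∑ r ∈ sm, m1 r ⊗ₜ[k] m0 r →
    ∑ i ∈ sh3, ∑ j ∈ sg3, ∑ r ∈ sm,
        B.sigma (h1 i) (g1 j) (m1 r) •
          cweight coact ((B.sigma.flip (h3 i)).flip (g3 j))
            (act (B.mul (h2 i) (g2 j)) (m0 r)) =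
      ∑ i ∈ sh, ∑ j ∈ sg,
        act (h2' i) (cweight coact ((B.sigma (h1' i)).flip (g2' j)) (act (g1' j) m))
  yd3 : ∀ (h : H) (m : M) (sh sm : Finset ℕ) (h1 h2 m1 : ℕ → H) (m0 : ℕ → M),
    B.comul h = ∑ i ∈ sh, h1 i ⊗ₜ[k] h2 i →
    coact m = ∑ j ∈ sm, m1 j ⊗ₜ[k] m0 j →
    ∑ i ∈ sh, ∑ j ∈ sm, B.mul (h1 i) (m1 j) ⊗ₜ[k] act (h2 i) (m0 j) =
      ∑ i ∈ sh, (TensorProduct.map (B.mul.flip (h2 i)) LinearMap.id)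
        (coact (act (h1 i) m))


/-! ### Auxiliary development for U_relation_one -/

section Aux
variable {k H : Type} [Field k] [AddCommGroup H] [Module k H]

theorem rep2 (t : H ⊗[k] H) : ∃ (s : Finset ℕ) (x y : ℕ → H),
    t = ∑ i ∈ s, x i ⊗ₜ[k] y i := by
  induction t using TensorProduct.induction_on with
  | zero => exact ⟨∅, 0, 0, by simp⟩
  | tmul a b => exact ⟨{0}, fun _ => a, fun _ => b, by simp⟩
  | add u v hu hv =>
    obtain ⟨s, x, y, rfl⟩ := hu
    obtain ⟨s', x', y', rfl⟩ := hv
    refine ⟨s.image (2*·) ∪ s'.image (2*·+1),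
      fun n => if n % 2 = 0 then x (n/2) else x' (n/2),
      fun n => if n % 2 = 0 then y (n/2) else y' (n/2), ?_⟩
    rw [Finset.sum_union, Finset.sum_image (fun a _ b _ (h : 2*a = 2*b) => by omega),
      Finset.sum_image (fun a _ b _ (h : 2*a+1 = 2*b+1) => by omega)]
    · congr 1
      · refine Finset.sum_congr rfl fun i _ => ?_
        simp only [Nat.mul_mod_right, Nat.mul_div_cancel_left _ (by norm_num : (0:ℕ) < 2)]
        norm_num
      · refine Finset.sum_congr rfl fun i _ => ?_
        have h1 : (2*i+1) % 2 = 1 := by omega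
        have h2 : (2*i+1) / 2 = i := by omega
        simp only [h1, h2]; norm_num
    · rw [Finset.disjoint_left]
      rintro n hn hn'
      simp only [Finset.mem_image] at hn hn'
      omega

/-- index set for flattening a double sum into a single ℕ-indexed sum -/
def pf (s : Finset ℕ) (t : ℕ → Finset ℕ) : Finset ℕ :=
  s.biUnion fun i => (t i).image (Nat.pair i)

theorem sum_pf {M : Type*} [AddCommMonoid M] (s : Finset ℕ) (t : ℕ → Finset ℕ)
    (F : ℕ → ℕ → M) :
    ∑ n ∈ pf s t, F n.unpair.1 n.unpair.2 = ∑ i ∈ s, ∑ j ∈ t i, F i j := by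
  rw [pf, Finset.sum_biUnion]
  · refine Finset.sum_congr rfl fun i _ => ?_
    rw [Finset.sum_image (fun a _ b _ h => by
      have := congrArg (fun n => n.unpair.2) h; simpa using this)]
    simp
  · intro i _ j _ hij
    simp only [Function.onFun, Finset.disjoint_left, Finset.mem_image]
    rintro n ⟨p, _, rfl⟩ ⟨q, _, h⟩
    have := congrArg (fun n => n.unpair.1) h; simp at this; omega

variable {X M : Type} [AddCommMonoid X] [Module k X] [AddCommMonoid M] [Module k M]

/-- scalar-consume head leg -/
def csc (φ : H →ₗ[k] k) (F : X →ₗ[k] M) : H ⊗[k] X →ₗ[k] M :=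
  (TensorProduct.lid k M).toLinearMap ∘ₗ TensorProduct.map φ F

@[simp] theorem csc_tmul (φ : H →ₗ[k] k) (F : X →ₗ[k] M) (h : H) (x : X) :
    csc φ F (h ⊗ₜ[k] x) = φ h • F x := rfl

/-- scalar-consume last leg -/
def cscE (F : X →ₗ[k] M) (φ : H →ₗ[k] k) : X ⊗[k] H →ₗ[k] M :=
  (TensorProduct.rid k M).toLinearMap ∘ₗ TensorProduct.map F φ

@[simp] theorem cscE_tmul (F : X →ₗ[k] M) (φ : H →ₗ[k] k) (x : X) (h : H) :
    cscE F φ (x ⊗ₜ[k] h) = φ h • F x := by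
  simp [cscE, TensorProduct.rid_tmul]

/-- keep head leg, acting by a bilinear map on the processed rest -/
def mhd (G : H →ₗ[k] H →ₗ[k] H) (F : X →ₗ[k] H) : H ⊗[k] X →ₗ[k] H :=
  TensorProduct.lift (G.compl₂ F)

@[simp] theorem mhd_tmul (G : H →ₗ[k] H →ₗ[k] H) (F : X →ₗ[k] H) (h : H) (x : X) :
    mhd G F (h ⊗ₜ[k] x) = G h (F x) := rfl

end Aux

section Coalg
variable {k H : Type} [Field k] [AddCommGroup H] [Module k H]
variable (B : DualQuasiBialgebra k H)

theorem sum_eps_smul {x : H} {s : Finset ℕ} {x1 x2 : ℕ → H}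
    (h : B.comul x = ∑ i ∈ s, x1 i ⊗ₜ[k] x2 i) :
    ∑ i ∈ s, B.counit (x1 i) • x2 i = x := by
  have := B.counit_left x
  rw [h] at this
  simpa [map_sum] using this

theorem sum_smul_eps {x : H} {s : Finset ℕ} {x1 x2 : ℕ → H}
    (h : B.comul x = ∑ i ∈ s, x1 i ⊗ₜ[k] x2 i) :
    ∑ i ∈ s, B.counit (x2 i) • x1 i = x := by
  have := B.counit_right x
  rw [h] at this
  simpa [map_sum] using this

theorem sum_eps_eps {x : H} {s : Finset ℕ} {x1 x2 : ℕ → H}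
    (h : B.comul x = ∑ i ∈ s, x1 i ⊗ₜ[k] x2 i) :
    ∑ i ∈ s, B.counit (x1 i) * B.counit (x2 i) = B.counit x := by
  have := congrArg B.counit (sum_eps_smul B h)
  rw [map_sum] at this
  simpa [smul_eq_mul] using this

/-- right-comb presentation of `cD3`. -/
theorem cd3_right {x : H} {s : Finset ℕ} {x1 x2 : ℕ → H} {t : ℕ → Finset ℕ}
    {y1 y2 : ℕ → ℕ → H}
    (h : B.comul x = ∑ i ∈ s, x1 i ⊗ₜ[k] x2 i)
    (h2 : ∀ i ∈ s, B.comul (x2 i) = ∑ j ∈ t i, y1 i j ⊗ₜ[k] y2 i j) :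
    cD3 B.comul x = ∑ i ∈ s, ∑ j ∈ t i, x1 i ⊗ₜ[k] (y1 i j ⊗ₜ[k] y2 i j) := by
  rw [cD3, h, map_sum]
  refine Finset.sum_congr rfl fun i hi => ?_
  simp [h2 i hi, tmul_sum]

/-- left-comb presentation of `cD3` (uses coassociativity). -/
theorem cd3_left {x : H} {s : Finset ℕ} {x1 x2 : ℕ → H} {t : ℕ → Finset ℕ}
    {u v : ℕ → ℕ → H}
    (h : B.comul x = ∑ i ∈ s, x1 i ⊗ₜ[k] x2 i)
    (h2 : ∀ i ∈ s, B.comul (x1 i) = ∑ j ∈ t i, u i j ⊗ₜ[k] v i j) :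
    cD3 B.comul x = ∑ i ∈ s, ∑ j ∈ t i, u i j ⊗ₜ[k] (v i j ⊗ₜ[k] x2 i) := by
  have hc := B.coassoc x
  rw [cD3, ← hc, h, map_sum, map_sum]
  refine Finset.sum_congr rfl fun i hi => ?_
  simp [h2 i hi, sum_tmul, assoc_tmul]

/-- `cD4` as right-comb. -/
theorem cd4_right {x : H} {s : Finset ℕ} {x1 x2 : ℕ → H} {t : ℕ → Finset ℕ}
    {c1 cc : ℕ → ℕ → H} {u : ℕ → ℕ → Finset ℕ} {c2 c3 : ℕ → ℕ → ℕ → H}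
    (h : B.comul x = ∑ i ∈ s, x1 i ⊗ₜ[k] x2 i)
    (h2 : ∀ i ∈ s, B.comul (x2 i) = ∑ j ∈ t i, c1 i j ⊗ₜ[k] cc i j)
    (h3 : ∀ i ∈ s, ∀ j ∈ t i, B.comul (cc i j) = ∑ l ∈ u i j, c2 i j l ⊗ₜ[k] c3 i j l) :
    cD4 B.comul x = ∑ i ∈ s, ∑ j ∈ t i, ∑ l ∈ u i j,
      x1 i ⊗ₜ[k] (c1 i j ⊗ₜ[k] (c2 i j l ⊗ₜ[k] c3 i j l)) := by
  rw [cD4, cd3_right B h h2, map_sum]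
  refine Finset.sum_congr rfl fun i hi => ?_
  rw [map_sum]
  refine Finset.sum_congr rfl fun j hj => ?_
  simp [h3 i hi j hj, tmul_sum]

/-- `cD4` with both legs of `Δ` split once more ("TreeE"). -/
theorem cd4_pairs {x : H} {s : Finset ℕ} {x1 x2 : ℕ → H} {t : ℕ → Finset ℕ}
    {e1 e2 : ℕ → ℕ → H} {u : ℕ → Finset ℕ} {s3 s4 : ℕ → ℕ → H}
    (h : B.comul x = ∑ i ∈ s, x1 i ⊗ₜ[k] x2 i)
    (h2 : ∀ i ∈ s, B.comul (x1 i) = ∑ j ∈ t i, e1 i j ⊗ₜ[k] e2 i j)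
    (h3 : ∀ i ∈ s, B.comul (x2 i) = ∑ l ∈ u i, s3 i l ⊗ₜ[k] s4 i l) :
    cD4 B.comul x = ∑ i ∈ s, ∑ j ∈ t i, ∑ l ∈ u i,
      e1 i j ⊗ₜ[k] (e2 i j ⊗ₜ[k] (s3 i l ⊗ₜ[k] s4 i l)) := by
  rw [cD4, cd3_left B h h2, map_sum]
  refine Finset.sum_congr rfl fun i hi => ?_
  rw [map_sum]
  refine Finset.sum_congr rfl fun j hj => ?_
  simp [h3 i hi, tmul_sum]

end Coalg

section Coalg2
variable {k H : Type} [Field k] [AddCommGroup H] [Module k H]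
variable (B : DualQuasiBialgebra k H)

theorem cd4_second {x : H} {s : Finset ℕ} {x1 x2 : ℕ → H}
    (h : B.comul x = ∑ i ∈ s, x1 i ⊗ₜ[k] x2 i) :
    cD4 B.comul x = ∑ i ∈ s, x1 i ⊗ₜ[k] cD3 B.comul (x2 i) := by
  rw [cD4, cD3, h, map_sum, map_sum]
  refine Finset.sum_congr rfl fun i hi => ?_
  simp [cD3]

theorem cd5_second {x : H} {s : Finset ℕ} {x1 x2 : ℕ → H}
    (h : B.comul x = ∑ i ∈ s, x1 i ⊗ₜ[k] x2 i) :
    cD5 B.comul x = ∑ i ∈ s, x1 i ⊗ₜ[k] cD4 B.comul (x2 i) := by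
  rw [cD5, cd4_second B h, map_sum]
  refine Finset.sum_congr rfl fun i hi => ?_
  simp [cD4]

/-- `cD4` obtained from `cD3` by expanding the middle leg (coassociativity). -/
theorem cd4_eq_mid (x : H) :
    cD4 B.comul x = (TensorProduct.map LinearMap.id (TensorProduct.assoc k H H H).toLinearMap)
      ((TensorProduct.map LinearMap.id (TensorProduct.map B.comul LinearMap.id))
        (cD3 B.comul x)) := by
  obtain ⟨s, x1, x2, h⟩ := rep2 (B.comul x)
  rw [cD4, cD3, h, map_sum, map_sum, map_sum, map_sum]
  refine Finset.sum_congr rfl fun i hi => ?_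
  simp only [map_tmul, LinearMap.id_coe, id_eq]
  rw [← B.coassoc (x2 i)]
  rfl

/-- expanding the middle leg of an arbitrary presentation of `cD3`. -/
theorem cd4_mid {x : H} {s : Finset ℕ} {n1 n2 n3 : ℕ → H} {t : ℕ → Finset ℕ}
    {p q : ℕ → ℕ → H}
    (h : cD3 B.comul x = ∑ i ∈ s, n1 i ⊗ₜ[k] (n2 i ⊗ₜ[k] n3 i))
    (h2 : ∀ i ∈ s, B.comul (n2 i) = ∑ j ∈ t i, p i j ⊗ₜ[k] q i j) :
    cD4 B.comul x = ∑ i ∈ s, ∑ j ∈ t i, n1 i ⊗ₜ[k] (p i j ⊗ₜ[k] (q i j ⊗ₜ[k] n3 i)) := by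
  rw [cd4_eq_mid B x, h, map_sum, map_sum]
  refine Finset.sum_congr rfl fun i hi => ?_
  simp [h2 i hi, sum_tmul, tmul_sum, assoc_tmul]

/-- doubly-indexed variant of `cd4_mid`. -/
theorem cd4_mid₂ {x : H} {s : Finset ℕ} {t : ℕ → Finset ℕ} {n1 n2 n3 : ℕ → ℕ → H}
    {u : ℕ → ℕ → Finset ℕ} {p q : ℕ → ℕ → ℕ → H}
    (h : cD3 B.comul x = ∑ i ∈ s, ∑ j ∈ t i, n1 i j ⊗ₜ[k] (n2 i j ⊗ₜ[k] n3 i j))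
    (h2 : ∀ i ∈ s, ∀ j ∈ t i, B.comul (n2 i j) = ∑ l ∈ u i j, p i j l ⊗ₜ[k] q i j l) :
    cD4 B.comul x = ∑ i ∈ s, ∑ j ∈ t i, ∑ l ∈ u i j,
      n1 i j ⊗ₜ[k] (p i j l ⊗ₜ[k] (q i j l ⊗ₜ[k] n3 i j)) := by
  rw [cd4_eq_mid B x, h, map_sum, map_sum]
  refine Finset.sum_congr rfl fun i hi => ?_
  rw [map_sum, map_sum]
  refine Finset.sum_congr rfl fun j hj => ?_
  simp [h2 i hi j hj, sum_tmul, tmul_sum, assoc_tmul]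

/-- "TreeB" presentation of `cD5`. -/
theorem cd5_treeB {x : H} {s : Finset ℕ} {P w : ℕ → H} {t : ℕ → Finset ℕ}
    {l1 l2 : ℕ → ℕ → H} {u : ℕ → Finset ℕ} {m q : ℕ → ℕ → H}
    {v : ℕ → ℕ → Finset ℕ} {l4 l5 : ℕ → ℕ → ℕ → H}
    (h : B.comul x = ∑ i ∈ s, P i ⊗ₜ[k] w i)
    (h2 : ∀ i ∈ s, B.comul (P i) = ∑ j ∈ t i, l1 i j ⊗ₜ[k] l2 i j)
    (h3 : ∀ i ∈ s, B.comul (w i) = ∑ l ∈ u i, m i l ⊗ₜ[k] q i l)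
    (h4 : ∀ i ∈ s, ∀ l ∈ u i, B.comul (q i l) = ∑ r ∈ v i l, l4 i l r ⊗ₜ[k] l5 i l r) :
    cD5 B.comul x = ∑ i ∈ s, ∑ j ∈ t i, ∑ l ∈ u i, ∑ r ∈ v i l,
      l1 i j ⊗ₜ[k] (l2 i j ⊗ₜ[k] (m i l ⊗ₜ[k] (l4 i l r ⊗ₜ[k] l5 i l r))) := by
  rw [cD5, cd4_pairs B h h2 h3, map_sum]
  refine Finset.sum_congr rfl fun i hi => ?_
  rw [map_sum]
  refine Finset.sum_congr rfl fun j hj => ?_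
  rw [map_sum]
  refine Finset.sum_congr rfl fun l hl => ?_
  simp [h4 i hi l hl, tmul_sum]

/-- "TreeC/F3" presentation of `cD5`. -/
theorem cd5_treeC {x : H} {s : Finset ℕ} {X1 X2 : ℕ → H} {t : ℕ → Finset ℕ}
    {Mm Z : ℕ → ℕ → H} {u : ℕ → ℕ → Finset ℕ} {m1 m2 : ℕ → ℕ → ℕ → H}
    {v : ℕ → ℕ → ℕ → Finset ℕ} {m3 m4 : ℕ → ℕ → ℕ → ℕ → H}
    (h : B.comul x = ∑ i ∈ s, X1 i ⊗ₜ[k] X2 i)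
    (h2 : ∀ i ∈ s, B.comul (X2 i) = ∑ j ∈ t i, Mm i j ⊗ₜ[k] Z i j)
    (h3 : ∀ i ∈ s, ∀ j ∈ t i, B.comul (Mm i j) = ∑ l ∈ u i j, m1 i j l ⊗ₜ[k] m2 i j l)
    (h4 : ∀ i ∈ s, ∀ j ∈ t i, ∀ l ∈ u i j,
      B.comul (m2 i j l) = ∑ r ∈ v i j l, m3 i j l r ⊗ₜ[k] m4 i j l r) :
    cD5 B.comul x = ∑ i ∈ s, ∑ j ∈ t i, ∑ l ∈ u i j, ∑ r ∈ v i j l,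
      X1 i ⊗ₜ[k] (m1 i j l ⊗ₜ[k] (m3 i j l r ⊗ₜ[k] (m4 i j l r ⊗ₜ[k] Z i j))) := by
  rw [cd5_second B h]
  refine Finset.sum_congr rfl fun i hi => ?_
  rw [cd4_mid₂ B (cd3_left B (h2 i hi) (h3 i hi)) (fun j hj l hl => h4 i hi j hj l hl)]
  simp [tmul_sum]

end Coalg2

section Conv
variable {k H : Type} [Field k] [AddCommGroup H] [Module k H]
variable (B : DualQuasiHopfAlgebra k H)

/-- `q^R(x, s(c)) = σ(x, s(c₁), c₃) α(c₂)` -/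
theorem qR_S (sInv : H →ₗ[k] H) (hsInv₁ : ∀ a : H, sInv (B.antipode a) = a)
    (qR : H →ₗ[k] H →ₗ[k] k)
    (hqR : ∀ (a b : H) (sb : Finset ℕ) (b1 b2 b3 : ℕ → H),
      cD3 B.comul b = ∑ i ∈ sb, b1 i ⊗ₜ[k] (b2 i ⊗ₜ[k] b3 i) →
      qR a b = ∑ i ∈ sb, B.sigma a (b3 i) (sInv (b1 i)) * B.alpha (sInv (b2 i)))
    (x c : H) {s : Finset ℕ} {c1 c2 : ℕ → H} {t : ℕ → Finset ℕ} {Mm Z : ℕ → ℕ → H}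
    (h : B.comul c = ∑ i ∈ s, c1 i ⊗ₜ[k] c2 i)
    (h2 : ∀ i ∈ s, B.comul (c2 i) = ∑ j ∈ t i, Mm i j ⊗ₜ[k] Z i j) :
    qR x (B.antipode c) = ∑ i ∈ s, ∑ j ∈ t i,
      B.sigma x (B.antipode (c1 i)) (Z i j) * B.alpha (Mm i j) := by
  have hSc : B.comul (B.antipode c) =
      ∑ i ∈ s, B.antipode (c2 i) ⊗ₜ[k] B.antipode (c1 i) :=
    B.comul_antipode c s c1 c2 h
  have hSc2 : ∀ i ∈ s, B.comul (B.antipode (c2 i)) =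
      ∑ j ∈ t i, B.antipode (Z i j) ⊗ₜ[k] B.antipode (Mm i j) :=
    fun i hi => B.comul_antipode (c2 i) (t i) (Mm i) (Z i) (h2 i hi)
  have hcd3 : cD3 B.comul (B.antipode c) = ∑ i ∈ s, ∑ j ∈ t i,
      B.antipode (Z i j) ⊗ₜ[k] (B.antipode (Mm i j) ⊗ₜ[k] B.antipode (c1 i)) :=
    cd3_left B.toDualQuasiBialgebra hSc hSc2
  rw [← sum_pf s t
    (fun i j => B.antipode (Z i j) ⊗ₜ[k] (B.antipode (Mm i j) ⊗ₜ[k] B.antipode (c1 i)))] at hcd3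
  rw [hqR x (B.antipode c) (pf s t)
    (fun n => B.antipode (Z n.unpair.1 n.unpair.2))
    (fun n => B.antipode (Mm n.unpair.1 n.unpair.2))
    (fun n => B.antipode (c1 n.unpair.1)) hcd3]
  simp only [hsInv₁]
  exact sum_pf s t (fun i j => B.sigma x (B.antipode (c1 i)) (Z i j) * B.alpha (Mm i j))

/-- pointwise form of the antipode/alpha axiom over a two-level tree -/
theorem alpha_tree (h' : H) {s : Finset ℕ} {h1 h2 : ℕ → H} {t : ℕ → Finset ℕ}
    {p q : ℕ → ℕ → H}
    (h : B.comul h' = ∑ i ∈ s, h1 i ⊗ₜ[k] h2 i)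
    (hh : ∀ i ∈ s, B.comul (h2 i) = ∑ j ∈ t i, p i j ⊗ₜ[k] q i j) :
    ∑ i ∈ s, ∑ j ∈ t i, B.alpha (p i j) • B.mul (B.antipode (h1 i)) (q i j)
      = B.alpha h' • B.one := by
  have hcd3 := cd3_right B.toDualQuasiBialgebra h hh
  rw [← sum_pf s t (fun i j => h1 i ⊗ₜ[k] (p i j ⊗ₜ[k] q i j))] at hcd3
  have := B.antipode_alpha h' (pf s t)
    (fun n => h1 n.unpair.1) (fun n => p n.unpair.1 n.unpair.2)
    (fun n => q n.unpair.1 n.unpair.2) hcd3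
  rw [← this]
  exact (sum_pf s t _).symm

/-- pointwise form of the twist equation over two-level trees -/
theorem twist_tree (f g : H →ₗ[k] H →ₗ[k] k)
    (hTwist : ∀ (a b : H) (sa sb : Finset ℕ) (a1 a2 a3 b1 b2 b3 : ℕ → H),
      cD3 B.comul a = ∑ i ∈ sa, a1 i ⊗ₜ[k] (a2 i ⊗ₜ[k] a3 i) →
      cD3 B.comul b = ∑ j ∈ sb, b1 j ⊗ₜ[k] (b2 j ⊗ₜ[k] b3 j) →
      ∑ i ∈ sa, ∑ j ∈ sb,
          (f (a1 i) (b1 j) * g (a3 i) (b3 j)) • B.antipode (B.mul (a2 i) (b2 j)) =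
        B.mul (B.antipode b) (B.antipode a))
    (x y : H) {s : Finset ℕ} {c1 cc : ℕ → H} {t : ℕ → Finset ℕ} {c2 c3 : ℕ → ℕ → H}
    {s' : Finset ℕ} {d1 dd : ℕ → H} {t' : ℕ → Finset ℕ} {d2 d3 : ℕ → ℕ → H}
    (hx : B.comul x = ∑ i ∈ s, c1 i ⊗ₜ[k] cc i)
    (hx2 : ∀ i ∈ s, B.comul (cc i) = ∑ j ∈ t i, c2 i j ⊗ₜ[k] c3 i j)
    (hy : B.comul y = ∑ i ∈ s', d1 i ⊗ₜ[k] dd i)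
    (hy2 : ∀ i ∈ s', B.comul (dd i) = ∑ j ∈ t' i, d2 i j ⊗ₜ[k] d3 i j) :
    ∑ i ∈ s, ∑ j ∈ t i, ∑ m ∈ s', ∑ n ∈ t' m,
        (f (c1 i) (d1 m) * g (c3 i j) (d3 m n)) •
          B.antipode (B.mul (c2 i j) (d2 m n)) =
      B.mul (B.antipode y) (B.antipode x) := by
  have hcx := cd3_right B.toDualQuasiBialgebra hx hx2
  have hcy := cd3_right B.toDualQuasiBialgebra hy hy2
  rw [← sum_pf s t (fun i j => c1 i ⊗ₜ[k] (c2 i j ⊗ₜ[k] c3 i j))] at hcx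
  rw [← sum_pf s' t' (fun i j => d1 i ⊗ₜ[k] (d2 i j ⊗ₜ[k] d3 i j))] at hcy
  have := hTwist x y (pf s t) (pf s' t')
    (fun n => c1 n.unpair.1) (fun n => c2 n.unpair.1 n.unpair.2)
    (fun n => c3 n.unpair.1 n.unpair.2)
    (fun n => d1 n.unpair.1) (fun n => d2 n.unpair.1 n.unpair.2)
    (fun n => d3 n.unpair.1 n.unpair.2) hcx hcy
  rw [← this]
  rw [show (∑ i ∈ s, ∑ j ∈ t i, ∑ m ∈ s', ∑ n ∈ t' m,
      (f (c1 i) (d1 m) * g (c3 i j) (d3 m n)) • B.antipode (B.mul (c2 i j) (d2 m n))) =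
    ∑ i ∈ s, ∑ j ∈ t i, (fun ii jj => ∑ m ∈ s', ∑ n ∈ t' m,
      (f (c1 ii) (d1 m) * g (c3 ii jj) (d3 m n)) •
        B.antipode (B.mul (c2 ii jj) (d2 m n))) i j from rfl]
  rw [← sum_pf s t]
  refine Finset.sum_congr rfl fun i _ => ?_
  exact (sum_pf s' t' _).symm
end Conv

section Star
variable {k H : Type} [Field k] [AddCommGroup H] [Module k H]
variable (B : DualQuasiHopfAlgebra k H)

/-- the key twist-transport identity:
`s(x₁y₁) g(x₂,y₂) = g(x₁,y₁) s(y₂)s(x₂)` -/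
theorem star (f g : H →ₗ[k] H →ₗ[k] k)
    (hgf : ∀ (a b : H) (sa sb : Finset ℕ) (a1 a2 b1 b2 : ℕ → H),
      B.comul a = ∑ i ∈ sa, a1 i ⊗ₜ[k] a2 i →
      B.comul b = ∑ j ∈ sb, b1 j ⊗ₜ[k] b2 j →
      ∑ i ∈ sa, ∑ j ∈ sb, g (a1 i) (b1 j) * f (a2 i) (b2 j) = B.counit a * B.counit b)
    (hTwist : ∀ (a b : H) (sa sb : Finset ℕ) (a1 a2 a3 b1 b2 b3 : ℕ → H),
      cD3 B.comul a = ∑ i ∈ sa, a1 i ⊗ₜ[k] (a2 i ⊗ₜ[k] a3 i) →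
      cD3 B.comul b = ∑ j ∈ sb, b1 j ⊗ₜ[k] (b2 j ⊗ₜ[k] b3 j) →
      ∑ i ∈ sa, ∑ j ∈ sb,
          (f (a1 i) (b1 j) * g (a3 i) (b3 j)) • B.antipode (B.mul (a2 i) (b2 j)) =
        B.mul (B.antipode b) (B.antipode a))
    (x y : H) {sx : Finset ℕ} {x1 x2 : ℕ → H} {sy : Finset ℕ} {y1 y2 : ℕ → H}
    (hx : B.comul x = ∑ i ∈ sx, x1 i ⊗ₜ[k] x2 i)
    (hy : B.comul y = ∑ j ∈ sy, y1 j ⊗ₜ[k] y2 j) :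
    ∑ i ∈ sx, ∑ j ∈ sy, g (x2 i) (y2 j) • B.antipode (B.mul (x1 i) (y1 j)) =
      ∑ i ∈ sx, ∑ j ∈ sy, g (x1 i) (y1 j) •
        B.mul (B.antipode (y2 j)) (B.antipode (x2 i)) := by
  classical
  -- presentations of deeper coproducts
  choose t c1 cc hcc using fun i => rep2 (B.comul (x2 i))
  choose u c2 c3 hc3 using fun i r => rep2 (B.comul (cc i r))
  choose tt e1 e2 he2 using fun i => rep2 (B.comul (x1 i))
  choose t' d1 dd hdd using fun j => rep2 (B.comul (y2 j))
  choose u' d2 d3 hd3 using fun j m => rep2 (B.comul (dd j m))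
  choose tt' f1 f2 hf2 using fun j => rep2 (B.comul (y1 j))
  -- Step 1: expand the RHS via the twist equation
  have step1 : (∑ i ∈ sx, ∑ j ∈ sy, g (x1 i) (y1 j) •
      B.mul (B.antipode (y2 j)) (B.antipode (x2 i))) =
      ∑ i ∈ sx, ∑ j ∈ sy, ∑ r ∈ t i, ∑ l ∈ u i r, ∑ m ∈ t' j, ∑ n ∈ u' j m,
        (g (x1 i) (y1 j) * (f (c1 i r) (d1 j m) * g (c3 i r l) (d3 j m n))) •
          B.antipode (B.mul (c2 i r l) (d2 j m n)) := by
    refine Finset.sum_congr rfl fun i _ => Finset.sum_congr rfl fun j _ => ?_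
    rw [← twist_tree B f g hTwist (x2 i) (y2 j) (hcc i) (fun r _ => hc3 i r)
      (hdd j) (fun m _ => hd3 j m)]
    rw [Finset.smul_sum]
    refine Finset.sum_congr rfl fun r _ => ?_
    rw [Finset.smul_sum]
    refine Finset.sum_congr rfl fun l _ => ?_
    rw [Finset.smul_sum]
    refine Finset.sum_congr rfl fun m _ => ?_
    rw [Finset.smul_sum]
    refine Finset.sum_congr rfl fun n _ => ?_
    rw [smul_smul]
  -- Step 2: move the j-sum inside past r and l
  have step2 : (∑ i ∈ sx, ∑ j ∈ sy, ∑ r ∈ t i, ∑ l ∈ u i r, ∑ m ∈ t' j,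
      ∑ n ∈ u' j m,
        (g (x1 i) (y1 j) * (f (c1 i r) (d1 j m) * g (c3 i r l) (d3 j m n))) •
          B.antipode (B.mul (c2 i r l) (d2 j m n))) =
      ∑ i ∈ sx, ∑ r ∈ t i, ∑ l ∈ u i r, ∑ j ∈ sy, ∑ m ∈ t' j, ∑ n ∈ u' j m,
        (g (x1 i) (y1 j) * (f (c1 i r) (d1 j m) * g (c3 i r l) (d3 j m n))) •
          B.antipode (B.mul (c2 i r l) (d2 j m n)) := by
    refine Finset.sum_congr rfl fun i _ => ?_
    rw [Finset.sum_comm]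
    refine Finset.sum_congr rfl fun r _ => ?_
    rw [Finset.sum_comm]
  -- the x-transfer map
  set Ebar : H ⊗[k] (H ⊗[k] (H ⊗[k] H)) →ₗ[k] H :=
    ∑ j ∈ sy, ∑ m ∈ t' j, ∑ n ∈ u' j m,
      csc (g.flip (y1 j)) (csc (f.flip (d1 j m))
        (cscE (B.antipode ∘ₗ (B.mul.flip (d2 j m n))) (g.flip (d3 j m n)))) with hEbar
  have Ebar_tmul : ∀ (n1 n2 n3 n4 : H), Ebar (n1 ⊗ₜ[k] (n2 ⊗ₜ[k] (n3 ⊗ₜ[k] n4))) =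
      ∑ j ∈ sy, ∑ m ∈ t' j, ∑ n ∈ u' j m,
        (g n1 (y1 j) * (f n2 (d1 j m) * (g n4 (d3 j m n)))) •
          B.antipode (B.mul n3 (d2 j m n)) := by
    intro n1 n2 n3 n4
    rw [hEbar]
    simp only [LinearMap.coe_sum, Finset.sum_apply, csc_tmul, cscE_tmul,
      LinearMap.comp_apply, LinearMap.flip_apply, smul_smul, Finset.smul_sum]
  -- Step 3: x-side tree transfer
  have step3L : Ebar (cD4 B.comul x) =
      ∑ i ∈ sx, ∑ r ∈ t i, ∑ l ∈ u i r, ∑ j ∈ sy, ∑ m ∈ t' j, ∑ n ∈ u' j m,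
        (g (x1 i) (y1 j) * (f (c1 i r) (d1 j m) * g (c3 i r l) (d3 j m n))) •
          B.antipode (B.mul (c2 i r l) (d2 j m n)) := by
    rw [cd4_right B.toDualQuasiBialgebra hx (fun i _ => hcc i) (fun i _ r _ => hc3 i r)]
    rw [map_sum]
    refine Finset.sum_congr rfl fun i _ => ?_
    rw [map_sum]
    refine Finset.sum_congr rfl fun r _ => ?_
    rw [map_sum]
    refine Finset.sum_congr rfl fun l _ => ?_
    exact Ebar_tmul _ _ _ _
  have step3R : Ebar (cD4 B.comul x) =
      ∑ i ∈ sx, ∑ w ∈ tt i, ∑ r ∈ t i, ∑ j ∈ sy, ∑ m ∈ t' j, ∑ n ∈ u' j m,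
        (g (e1 i w) (y1 j) * (f (e2 i w) (d1 j m) * g (cc i r) (d3 j m n))) •
          B.antipode (B.mul (c1 i r) (d2 j m n)) := by
    rw [cd4_pairs B.toDualQuasiBialgebra hx (fun i _ => he2 i) (fun i _ => hcc i)]
    rw [map_sum]
    refine Finset.sum_congr rfl fun i _ => ?_
    rw [map_sum]
    refine Finset.sum_congr rfl fun w _ => ?_
    rw [map_sum]
    refine Finset.sum_congr rfl fun r _ => ?_
    exact Ebar_tmul _ _ _ _
  -- Step 4: y-side tree transfer (pointwise in the x-indices)
  set E4y : H → H → H → H → (H ⊗[k] (H ⊗[k] (H ⊗[k] H)) →ₗ[k] H) := fun p q a b =>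
    csc (g p) (csc (f q) (cscE (B.antipode ∘ₗ (B.mul a)) (g b))) with hE4y
  have E4y_tmul : ∀ (p q a b n1 n2 n3 n4 : H),
      E4y p q a b (n1 ⊗ₜ[k] (n2 ⊗ₜ[k] (n3 ⊗ₜ[k] n4))) =
        (g p n1 * (f q n2 * g b n4)) • B.antipode (B.mul a n3) := by
    intro p q a b n1 n2 n3 n4
    simp only [hE4y, csc_tmul, cscE_tmul, LinearMap.comp_apply, smul_smul]
  have step4 : (∑ i ∈ sx, ∑ w ∈ tt i, ∑ r ∈ t i, ∑ j ∈ sy, ∑ m ∈ t' j,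
      ∑ n ∈ u' j m,
        (g (e1 i w) (y1 j) * (f (e2 i w) (d1 j m) * g (cc i r) (d3 j m n))) •
          B.antipode (B.mul (c1 i r) (d2 j m n))) =
      ∑ i ∈ sx, ∑ w ∈ tt i, ∑ r ∈ t i, ∑ j ∈ sy, ∑ w' ∈ tt' j, ∑ m ∈ t' j,
        (g (e1 i w) (f1 j w') * (f (e2 i w) (f2 j w') * g (cc i r) (dd j m))) •
          B.antipode (B.mul (c1 i r) (d1 j m)) := by
    refine Finset.sum_congr rfl fun i _ => Finset.sum_congr rfl fun w _ =>
      Finset.sum_congr rfl fun r _ => ?_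
    have hL : E4y (e1 i w) (e2 i w) (c1 i r) (cc i r) (cD4 B.comul y) =
        ∑ j ∈ sy, ∑ m ∈ t' j, ∑ n ∈ u' j m,
          (g (e1 i w) (y1 j) * (f (e2 i w) (d1 j m) * g (cc i r) (d3 j m n))) •
            B.antipode (B.mul (c1 i r) (d2 j m n)) := by
      rw [cd4_right B.toDualQuasiBialgebra hy (fun j _ => hdd j) (fun j _ m _ => hd3 j m)]
      rw [map_sum]
      refine Finset.sum_congr rfl fun j _ => ?_
      rw [map_sum]
      refine Finset.sum_congr rfl fun m _ => ?_
      rw [map_sum]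
      exact Finset.sum_congr rfl fun n _ => E4y_tmul _ _ _ _ _ _ _ _
    have hR : E4y (e1 i w) (e2 i w) (c1 i r) (cc i r) (cD4 B.comul y) =
        ∑ j ∈ sy, ∑ w' ∈ tt' j, ∑ m ∈ t' j,
          (g (e1 i w) (f1 j w') * (f (e2 i w) (f2 j w') * g (cc i r) (dd j m))) •
            B.antipode (B.mul (c1 i r) (d1 j m)) := by
      rw [cd4_pairs B.toDualQuasiBialgebra hy (fun j _ => hf2 j) (fun j _ => hdd j)]
      rw [map_sum]
      refine Finset.sum_congr rfl fun j _ => ?_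
      rw [map_sum]
      refine Finset.sum_congr rfl fun w' _ => ?_
      rw [map_sum]
      exact Finset.sum_congr rfl fun m _ => E4y_tmul _ _ _ _ _ _ _ _
    exact hL.symm.trans hR
  -- Step 5: reorder sums to (i, r, j, m, w, w')
  have step5 : (∑ i ∈ sx, ∑ w ∈ tt i, ∑ r ∈ t i, ∑ j ∈ sy, ∑ w' ∈ tt' j,
      ∑ m ∈ t' j,
        (g (e1 i w) (f1 j w') * (f (e2 i w) (f2 j w') * g (cc i r) (dd j m))) •
          B.antipode (B.mul (c1 i r) (d1 j m))) =
      ∑ i ∈ sx, ∑ r ∈ t i, ∑ j ∈ sy, ∑ m ∈ t' j, ∑ w ∈ tt i, ∑ w' ∈ tt' j,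
        (g (e1 i w) (f1 j w') * (f (e2 i w) (f2 j w') * g (cc i r) (dd j m))) •
          B.antipode (B.mul (c1 i r) (d1 j m)) := by
    refine Finset.sum_congr rfl fun i _ => ?_
    rw [Finset.sum_comm]
    refine Finset.sum_congr rfl fun r _ => ?_
    rw [Finset.sum_comm]
    refine Finset.sum_congr rfl fun j _ => ?_
    exact (Finset.sum_congr rfl fun w _ => Finset.sum_comm).trans Finset.sum_comm
  -- Step 6: contract g ⋆ f to counits
  have step6 : (∑ i ∈ sx, ∑ r ∈ t i, ∑ j ∈ sy, ∑ m ∈ t' j, ∑ w ∈ tt i,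
      ∑ w' ∈ tt' j,
        (g (e1 i w) (f1 j w') * (f (e2 i w) (f2 j w') * g (cc i r) (dd j m))) •
          B.antipode (B.mul (c1 i r) (d1 j m))) =
      ∑ i ∈ sx, ∑ r ∈ t i, ∑ j ∈ sy, ∑ m ∈ t' j,
        (B.counit (x1 i) * B.counit (y1 j)) •
          (g (cc i r) (dd j m) • B.antipode (B.mul (c1 i r) (d1 j m))) := by
    refine Finset.sum_congr rfl fun i _ => Finset.sum_congr rfl fun r _ =>
      Finset.sum_congr rfl fun j _ => Finset.sum_congr rfl fun m _ => ?_
    rw [← hgf (x1 i) (y1 j) (tt i) (tt' j) (e1 i) (e2 i) (f1 j) (f2 j) (he2 i) (hf2 j),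
      Finset.sum_smul]
    refine Finset.sum_congr rfl fun w _ => ?_
    rw [Finset.sum_smul]
    refine Finset.sum_congr rfl fun w' _ => ?_
    rw [smul_smul, mul_assoc]
  -- Step 7: collapse the counits
  set Wbar : H ⊗[k] H →ₗ[k] H := ∑ j ∈ sy, ∑ m ∈ t' j, B.counit (y1 j) •
    cscE (B.antipode ∘ₗ B.mul.flip (d1 j m)) (g.flip (dd j m)) with hWbar
  have Wbar_tmul : ∀ a b : H, Wbar (a ⊗ₜ[k] b) = ∑ j ∈ sy, ∑ m ∈ t' j,
      B.counit (y1 j) • (g b (dd j m) • B.antipode (B.mul a (d1 j m))) := by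
    intro a b
    rw [hWbar]
    simp only [LinearMap.coe_sum, Finset.sum_apply, LinearMap.smul_apply, cscE_tmul,
      LinearMap.comp_apply, LinearMap.flip_apply]
  have step7 : (∑ i ∈ sx, ∑ r ∈ t i, ∑ j ∈ sy, ∑ m ∈ t' j,
      (B.counit (x1 i) * B.counit (y1 j)) •
        (g (cc i r) (dd j m) • B.antipode (B.mul (c1 i r) (d1 j m)))) =
      Wbar ((B.comul : H →ₗ[k] H ⊗[k] H) x) := by
    have : ∀ i r, (∑ j ∈ sy, ∑ m ∈ t' j,
        (B.counit (x1 i) * B.counit (y1 j)) •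
          (g (cc i r) (dd j m) • B.antipode (B.mul (c1 i r) (d1 j m)))) =
        B.counit (x1 i) • Wbar (c1 i r ⊗ₜ[k] cc i r) := by
      intro i r
      rw [Wbar_tmul, Finset.smul_sum]
      refine Finset.sum_congr rfl fun j _ => ?_
      rw [Finset.smul_sum]
      refine Finset.sum_congr rfl fun m _ => ?_
      rw [smul_smul, smul_smul, smul_smul]
    calc (∑ i ∈ sx, ∑ r ∈ t i, ∑ j ∈ sy, ∑ m ∈ t' j,
        (B.counit (x1 i) * B.counit (y1 j)) •
          (g (cc i r) (dd j m) • B.antipode (B.mul (c1 i r) (d1 j m))))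
        = ∑ i ∈ sx, B.counit (x1 i) • Wbar (B.comul (x2 i)) := by
          refine Finset.sum_congr rfl fun i _ => ?_
          rw [hcc i, map_sum, Finset.smul_sum]
          exact Finset.sum_congr rfl fun r _ => this i r
      _ = Wbar (B.comul (∑ i ∈ sx, B.counit (x1 i) • x2 i)) := by
          rw [map_sum, map_sum]
          exact Finset.sum_congr rfl fun i _ => by rw [map_smul, map_smul]
      _ = Wbar (B.comul x) := by rw [sum_eps_smul B.toDualQuasiBialgebra hx]
  have step8 : Wbar ((B.comul : H →ₗ[k] H ⊗[k] H) x) =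
      ∑ i ∈ sx, ∑ j ∈ sy, g (x2 i) (y2 j) • B.antipode (B.mul (x1 i) (y1 j)) := by
    rw [hx, map_sum]
    refine Finset.sum_congr rfl fun i _ => ?_
    rw [Wbar_tmul]
    set V : H ⊗[k] H →ₗ[k] H :=
      cscE (B.antipode ∘ₗ B.mul (x1 i)) (g (x2 i)) with hV
    have V_tmul : ∀ a b : H, V (a ⊗ₜ[k] b) =
        g (x2 i) b • B.antipode (B.mul (x1 i) a) := fun a b => rfl
    calc (∑ j ∈ sy, ∑ m ∈ t' j, B.counit (y1 j) •
          (g (x2 i) (dd j m) • B.antipode (B.mul (x1 i) (d1 j m))))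
        = ∑ j ∈ sy, B.counit (y1 j) • V (B.comul (y2 j)) := by
          refine Finset.sum_congr rfl fun j _ => ?_
          rw [hdd j, map_sum, Finset.smul_sum]
          exact Finset.sum_congr rfl fun m _ => by rw [V_tmul]
      _ = V (B.comul (∑ j ∈ sy, B.counit (y1 j) • y2 j)) := by
          rw [map_sum, map_sum]
          exact Finset.sum_congr rfl fun j _ => by rw [map_smul, map_smul]
      _ = V (B.comul y) := by rw [sum_eps_smul B.toDualQuasiBialgebra hy]
      _ = ∑ j ∈ sy, g (x2 i) (y2 j) • B.antipode (B.mul (x1 i) (y1 j)) := by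
          rw [hy, map_sum]
          exact Finset.sum_congr rfl fun j _ => V_tmul _ _
  rw [step1, step2, ← step3L, step3R, step4, step5, step6, step7, step8]

end Star

section Combinators
variable {k H : Type} [Field k] [AddCommGroup H] [Module k H]
variable {X M : Type} [AddCommMonoid X] [Module k X] [AddCommMonoid M] [Module k M]

/-- `csc φ ·` as a linear map in the second slot -/
def cscFunL (φ : H →ₗ[k] k) : (X →ₗ[k] M) →ₗ[k] (H ⊗[k] X →ₗ[k] M) where
  toFun F := csc φ F
  map_add' F F' := TensorProduct.ext' fun h x => by simp
  map_smul' c F := TensorProduct.ext' fun h x => by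
    simp [smul_comm (φ h) c]

@[simp] theorem cscFunL_apply (φ : H →ₗ[k] k) (F : X →ₗ[k] M) :
    cscFunL φ F = csc φ F := rfl

/-- `csc · F` as a linear map in the functional slot -/
def cscArgL (F : X →ₗ[k] M) : (H →ₗ[k] k) →ₗ[k] (H ⊗[k] X →ₗ[k] M) where
  toFun φ := csc φ F
  map_add' φ ψ := TensorProduct.ext' fun h x => by simp [add_smul]
  map_smul' c φ := TensorProduct.ext' fun h x => by simp [mul_smul]

@[simp] theorem cscArgL_apply (F : X →ₗ[k] M) (φ : H →ₗ[k] k) :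
    cscArgL F φ = csc φ F := rfl

/-- `cscE F ·` as a linear map in the functional slot -/
def cscEArgL (F : X →ₗ[k] M) : (H →ₗ[k] k) →ₗ[k] (X ⊗[k] H →ₗ[k] M) where
  toFun φ := cscE F φ
  map_add' φ ψ := TensorProduct.ext' fun x h => by simp [add_smul]
  map_smul' c φ := TensorProduct.ext' fun x h => by simp [mul_smul]

@[simp] theorem cscEArgL_apply (F : X →ₗ[k] M) (φ : H →ₗ[k] k) :
    cscEArgL F φ = cscE F φ := rfl

/-- `mhd G ·` as a linear map in the second slot -/
def mhdArgL (G : H →ₗ[k] H →ₗ[k] H) : (X →ₗ[k] H) →ₗ[k] (H ⊗[k] X →ₗ[k] H) where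
  toFun F := mhd G F
  map_add' F F' := TensorProduct.ext' fun h x => by simp [mhd]
  map_smul' c F := TensorProduct.ext' fun h x => by simp [mhd]

@[simp] theorem mhdArgL_apply (G : H →ₗ[k] H →ₗ[k] H) (F : X →ₗ[k] H) :
    mhdArgL G F = mhd G F := rfl

end Combinators

section M3
variable {k H : Type} [Field k] [AddCommGroup H] [Module k H]
variable (B : DualQuasiHopfAlgebra k H)

theorem M3 (sInv : H →ₗ[k] H) (hsInv₁ : ∀ a : H, sInv (B.antipode a) = a)
    (qR : H →ₗ[k] H →ₗ[k] k)
    (hqR : ∀ (a b : H) (sb : Finset ℕ) (b1 b2 b3 : ℕ → H),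
      cD3 B.comul b = ∑ i ∈ sb, b1 i ⊗ₜ[k] (b2 i ⊗ₜ[k] b3 i) →
      qR a b = ∑ i ∈ sb, B.sigma a (b3 i) (sInv (b1 i)) * B.alpha (sInv (b2 i)))
    (x y : H) {sy : Finset ℕ} {y1 y2 : ℕ → H} {sx : Finset ℕ} {X1 X2 : ℕ → H}
    {t : ℕ → Finset ℕ} {Mm Z : ℕ → ℕ → H}
    (hy : B.comul y = ∑ j ∈ sy, y1 j ⊗ₜ[k] y2 j)
    (hx : B.comul x = ∑ i ∈ sx, X1 i ⊗ₜ[k] X2 i)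
    (hX2 : ∀ i ∈ sx, B.comul (X2 i) = ∑ q ∈ t i, Mm i q ⊗ₜ[k] Z i q) :
    ∑ i ∈ sx, ∑ q ∈ t i, ∑ j ∈ sy,
        qR (B.antipode (y2 j)) (B.antipode (Mm i q)) •
          B.mul (B.mul (B.antipode (y1 j)) (B.antipode (X1 i))) (Z i q) =
      ∑ j ∈ sy, qR (B.antipode (y1 j)) (B.antipode x) • B.antipode (y2 j) := by
  classical
  choose u m1 m2 hm2 using fun i q => rep2 (B.comul (Mm i q))
  choose v m3 m4 hm4 using fun i q r => rep2 (B.comul (m2 i q r))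
  obtain ⟨sP, P, W, hPW⟩ := rep2 ((B.comul : H →ₗ[k] H ⊗[k] H) x)
  choose tP l1 l2 hl2 using fun i => rep2 (B.comul (P i))
  choose tW mm qq hmq using fun i => rep2 (B.comul (W i))
  choose tQ l4 l5 hl45 using fun i l => rep2 (B.comul (qq i l))
  -- Step 1: expand qR on the Φ₂ side
  have step1 : (∑ i ∈ sx, ∑ q ∈ t i, ∑ j ∈ sy,
      qR (B.antipode (y2 j)) (B.antipode (Mm i q)) •
        B.mul (B.mul (B.antipode (y1 j)) (B.antipode (X1 i))) (Z i q)) =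
      ∑ i ∈ sx, ∑ q ∈ t i, ∑ j ∈ sy, ∑ r ∈ u i q, ∑ w ∈ v i q r,
        (B.alpha (m3 i q r w) *
            B.sigma (B.antipode (y2 j)) (B.antipode (m1 i q r)) (m4 i q r w)) •
          B.mul (B.mul (B.antipode (y1 j)) (B.antipode (X1 i))) (Z i q) := by
    refine Finset.sum_congr rfl fun i _ => Finset.sum_congr rfl fun q hq =>
      Finset.sum_congr rfl fun j _ => ?_
    rw [qR_S B sInv hsInv₁ qR hqR (B.antipode (y2 j)) (Mm i q) (hm2 i q)
      (fun r _ => hm4 i q r), Finset.sum_smul]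
    refine Finset.sum_congr rfl fun r _ => ?_
    rw [Finset.sum_smul]
    refine Finset.sum_congr rfl fun w _ => ?_
    rw [mul_comm]
  -- Step 2: move the j-sum inside
  have step2 : (∑ i ∈ sx, ∑ q ∈ t i, ∑ j ∈ sy, ∑ r ∈ u i q, ∑ w ∈ v i q r,
      (B.alpha (m3 i q r w) *
          B.sigma (B.antipode (y2 j)) (B.antipode (m1 i q r)) (m4 i q r w)) •
        B.mul (B.mul (B.antipode (y1 j)) (B.antipode (X1 i))) (Z i q)) =
      ∑ i ∈ sx, ∑ q ∈ t i, ∑ r ∈ u i q, ∑ w ∈ v i q r, ∑ j ∈ sy,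
        (B.alpha (m3 i q r w) *
            B.sigma (B.antipode (y2 j)) (B.antipode (m1 i q r)) (m4 i q r w)) •
          B.mul (B.mul (B.antipode (y1 j)) (B.antipode (X1 i))) (Z i q) := by
    refine Finset.sum_congr rfl fun i _ => Finset.sum_congr rfl fun q _ => ?_
    rw [Finset.sum_comm]
    refine Finset.sum_congr rfl fun r _ => ?_
    rw [Finset.sum_comm]
  -- the first transfer map
  set E5a : (H ⊗[k] (H ⊗[k] (H ⊗[k] (H ⊗[k] H)))) →ₗ[k] H :=
    ∑ j ∈ sy, (mhd (B.mul ∘ₗ (B.mul (B.antipode (y1 j))) ∘ₗ B.antipode)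
      ((TensorProduct.lift ((cscFunL B.alpha) ∘ₗ (cscArgL (LinearMap.id (R := k) (M := H)))
        ∘ₗ ((B.sigma (B.antipode (y2 j))) ∘ₗ B.antipode)) :
          H ⊗[k] (H ⊗[k] (H ⊗[k] H)) →ₗ[k] H)) :
            H ⊗[k] (H ⊗[k] (H ⊗[k] (H ⊗[k] H))) →ₗ[k] H) with hE5a
  have E5a_tmul : ∀ n1 n2 n3 n4 n5 : H,
      E5a (n1 ⊗ₜ[k] (n2 ⊗ₜ[k] (n3 ⊗ₜ[k] (n4 ⊗ₜ[k] n5)))) =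
      ∑ j ∈ sy, (B.alpha n3 * B.sigma (B.antipode (y2 j)) (B.antipode n2) n4) •
        B.mul (B.mul (B.antipode (y1 j)) (B.antipode n1)) n5 := by
    intro n1 n2 n3 n4 n5
    rw [hE5a]
    simp only [LinearMap.coe_sum, Finset.sum_apply, mhd_tmul, lift.tmul,
      LinearMap.comp_apply, cscFunL_apply, cscArgL_apply, csc_tmul, LinearMap.id_coe,
      id_eq, map_smul, smul_smul]
  -- Step 3: transfer from TreeC to TreeB
  have step3L : E5a (cD5 B.comul x) =
      ∑ i ∈ sx, ∑ q ∈ t i, ∑ r ∈ u i q, ∑ w ∈ v i q r, ∑ j ∈ sy,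
        (B.alpha (m3 i q r w) *
            B.sigma (B.antipode (y2 j)) (B.antipode (m1 i q r)) (m4 i q r w)) •
          B.mul (B.mul (B.antipode (y1 j)) (B.antipode (X1 i))) (Z i q) := by
    rw [cd5_treeC B.toDualQuasiBialgebra hx hX2 (fun i _ q _ => hm2 i q)
      (fun i _ q _ r _ => hm4 i q r), map_sum]
    refine Finset.sum_congr rfl fun i _ => ?_
    rw [map_sum]
    refine Finset.sum_congr rfl fun q _ => ?_
    rw [map_sum]
    refine Finset.sum_congr rfl fun r _ => ?_
    rw [map_sum]
    exact Finset.sum_congr rfl fun w _ => E5a_tmul _ _ _ _ _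
  have step3R : E5a (cD5 B.comul x) =
      ∑ i ∈ sP, ∑ j2 ∈ tP i, ∑ l ∈ tW i, ∑ r2 ∈ tQ i l, ∑ j ∈ sy,
        (B.alpha (mm i l) *
            B.sigma (B.antipode (y2 j)) (B.antipode (l2 i j2)) (l4 i l r2)) •
          B.mul (B.mul (B.antipode (y1 j)) (B.antipode (l1 i j2))) (l5 i l r2) := by
    rw [cd5_treeB B.toDualQuasiBialgebra hPW (fun i _ => hl2 i) (fun i _ => hmq i)
      (fun i _ l _ => hl45 i l), map_sum]
    refine Finset.sum_congr rfl fun i _ => ?_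
    rw [map_sum]
    refine Finset.sum_congr rfl fun j2 _ => ?_
    rw [map_sum]
    refine Finset.sum_congr rfl fun l _ => ?_
    rw [map_sum]
    exact Finset.sum_congr rfl fun r2 _ => E5a_tmul _ _ _ _ _
  -- Step 4: reorder for the quasi-associativity axiom
  have step4 : (∑ i ∈ sP, ∑ j2 ∈ tP i, ∑ l ∈ tW i, ∑ r2 ∈ tQ i l, ∑ j ∈ sy,
      (B.alpha (mm i l) *
          B.sigma (B.antipode (y2 j)) (B.antipode (l2 i j2)) (l4 i l r2)) •
        B.mul (B.mul (B.antipode (y1 j)) (B.antipode (l1 i j2))) (l5 i l r2)) =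
      ∑ i ∈ sP, ∑ l ∈ tW i, ∑ j ∈ sy, ∑ j2 ∈ tP i, ∑ r2 ∈ tQ i l,
        (B.alpha (mm i l) *
            B.sigma (B.antipode (y2 j)) (B.antipode (l2 i j2)) (l4 i l r2)) •
          B.mul (B.mul (B.antipode (y1 j)) (B.antipode (l1 i j2))) (l5 i l r2) := by
    refine Finset.sum_congr rfl fun i _ => ?_
    rw [Finset.sum_comm]
    refine Finset.sum_congr rfl fun l _ => ?_
    exact (Finset.sum_congr rfl fun j2 _ => Finset.sum_comm).trans Finset.sum_comm
  -- Step 5: apply quasi-associativity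
  have step5 : (∑ i ∈ sP, ∑ l ∈ tW i, ∑ j ∈ sy, ∑ j2 ∈ tP i, ∑ r2 ∈ tQ i l,
      (B.alpha (mm i l) *
          B.sigma (B.antipode (y2 j)) (B.antipode (l2 i j2)) (l4 i l r2)) •
        B.mul (B.mul (B.antipode (y1 j)) (B.antipode (l1 i j2))) (l5 i l r2)) =
      ∑ i ∈ sP, ∑ l ∈ tW i, ∑ j ∈ sy, ∑ j2 ∈ tP i, ∑ r2 ∈ tQ i l,
        (B.alpha (mm i l) *
            B.sigma (B.antipode (y1 j)) (B.antipode (l1 i j2)) (l5 i l r2)) •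
          B.mul (B.antipode (y2 j)) (B.mul (B.antipode (l2 i j2)) (l4 i l r2)) := by
    refine Finset.sum_congr rfl fun i _ => Finset.sum_congr rfl fun l _ => ?_
    have hq := B.quasi_assoc (B.antipode y) (B.antipode (P i)) (qq i l)
      sy (tP i) (tQ i l)
      (fun j => B.antipode (y2 j)) (fun j => B.antipode (y1 j))
      (fun j2 => B.antipode (l2 i j2)) (fun j2 => B.antipode (l1 i j2))
      (l4 i l) (l5 i l)
      (B.comul_antipode y sy y1 y2 hy)
      (B.comul_antipode (P i) (tP i) (l1 i) (l2 i) (hl2 i))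
      (hl45 i l)
    calc (∑ j ∈ sy, ∑ j2 ∈ tP i, ∑ r2 ∈ tQ i l,
        (B.alpha (mm i l) *
            B.sigma (B.antipode (y2 j)) (B.antipode (l2 i j2)) (l4 i l r2)) •
          B.mul (B.mul (B.antipode (y1 j)) (B.antipode (l1 i j2))) (l5 i l r2))
        = B.alpha (mm i l) • ∑ j ∈ sy, ∑ j2 ∈ tP i, ∑ r2 ∈ tQ i l,
            B.sigma (B.antipode (y2 j)) (B.antipode (l2 i j2)) (l4 i l r2) •
              B.mul (B.mul (B.antipode (y1 j)) (B.antipode (l1 i j2))) (l5 i l r2) := by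
          rw [Finset.smul_sum]
          refine Finset.sum_congr rfl fun j _ => ?_
          rw [Finset.smul_sum]
          refine Finset.sum_congr rfl fun j2 _ => ?_
          rw [Finset.smul_sum]
          refine Finset.sum_congr rfl fun r2 _ => ?_
          rw [smul_smul]
      _ = B.alpha (mm i l) • ∑ j ∈ sy, ∑ j2 ∈ tP i, ∑ r2 ∈ tQ i l,
            B.sigma (B.antipode (y1 j)) (B.antipode (l1 i j2)) (l5 i l r2) •
              B.mul (B.antipode (y2 j)) (B.mul (B.antipode (l2 i j2)) (l4 i l r2)) := by
          rw [← hq]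
      _ = ∑ j ∈ sy, ∑ j2 ∈ tP i, ∑ r2 ∈ tQ i l,
            (B.alpha (mm i l) *
                B.sigma (B.antipode (y1 j)) (B.antipode (l1 i j2)) (l5 i l r2)) •
              B.mul (B.antipode (y2 j)) (B.mul (B.antipode (l2 i j2)) (l4 i l r2)) := by
          rw [Finset.smul_sum]
          refine Finset.sum_congr rfl fun j _ => ?_
          rw [Finset.smul_sum]
          refine Finset.sum_congr rfl fun j2 _ => ?_
          rw [Finset.smul_sum]
          refine Finset.sum_congr rfl fun r2 _ => ?_
          rw [smul_smul]
  -- Step 6: reorder back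
  have step6 : (∑ i ∈ sP, ∑ l ∈ tW i, ∑ j ∈ sy, ∑ j2 ∈ tP i, ∑ r2 ∈ tQ i l,
      (B.alpha (mm i l) *
          B.sigma (B.antipode (y1 j)) (B.antipode (l1 i j2)) (l5 i l r2)) •
        B.mul (B.antipode (y2 j)) (B.mul (B.antipode (l2 i j2)) (l4 i l r2))) =
      ∑ i ∈ sP, ∑ j2 ∈ tP i, ∑ l ∈ tW i, ∑ r2 ∈ tQ i l, ∑ j ∈ sy,
        (B.alpha (mm i l) *
            B.sigma (B.antipode (y1 j)) (B.antipode (l1 i j2)) (l5 i l r2)) •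
          B.mul (B.antipode (y2 j)) (B.mul (B.antipode (l2 i j2)) (l4 i l r2)) := by
    refine Finset.sum_congr rfl fun i _ => ?_
    calc (∑ l ∈ tW i, ∑ j ∈ sy, ∑ j2 ∈ tP i, ∑ r2 ∈ tQ i l,
        (B.alpha (mm i l) *
            B.sigma (B.antipode (y1 j)) (B.antipode (l1 i j2)) (l5 i l r2)) •
          B.mul (B.antipode (y2 j)) (B.mul (B.antipode (l2 i j2)) (l4 i l r2)))
        = ∑ l ∈ tW i, ∑ j2 ∈ tP i, ∑ r2 ∈ tQ i l, ∑ j ∈ sy,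
            (B.alpha (mm i l) *
                B.sigma (B.antipode (y1 j)) (B.antipode (l1 i j2)) (l5 i l r2)) •
              B.mul (B.antipode (y2 j)) (B.mul (B.antipode (l2 i j2)) (l4 i l r2)) := by
          refine Finset.sum_congr rfl fun l _ => ?_
          exact Finset.sum_comm.trans (Finset.sum_congr rfl fun j2 _ => Finset.sum_comm)
      _ = ∑ j2 ∈ tP i, ∑ l ∈ tW i, ∑ r2 ∈ tQ i l, ∑ j ∈ sy,
            (B.alpha (mm i l) *
                B.sigma (B.antipode (y1 j)) (B.antipode (l1 i j2)) (l5 i l r2)) •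
              B.mul (B.antipode (y2 j)) (B.mul (B.antipode (l2 i j2)) (l4 i l r2)) :=
          Finset.sum_comm
  -- the second transfer map
  set E5b : (H ⊗[k] (H ⊗[k] (H ⊗[k] (H ⊗[k] H)))) →ₗ[k] H :=
    ∑ j ∈ sy, (TensorProduct.lift
      ((mhdArgL ((LinearMap.llcomp k H H H (B.mul (B.antipode (y2 j)))) ∘ₗ
          (B.mul ∘ₗ B.antipode))) ∘ₗ
        (cscFunL B.alpha) ∘ₗ
        (cscEArgL (LinearMap.id (R := k) (M := H))) ∘ₗ
        ((B.sigma (B.antipode (y1 j))) ∘ₗ B.antipode)) :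
      H ⊗[k] (H ⊗[k] (H ⊗[k] (H ⊗[k] H))) →ₗ[k] H) with hE5b
  have E5b_tmul : ∀ n1 n2 n3 n4 n5 : H,
      E5b (n1 ⊗ₜ[k] (n2 ⊗ₜ[k] (n3 ⊗ₜ[k] (n4 ⊗ₜ[k] n5)))) =
      ∑ j ∈ sy, (B.alpha n3 * B.sigma (B.antipode (y1 j)) (B.antipode n1) n5) •
        B.mul (B.antipode (y2 j)) (B.mul (B.antipode n2) n4) := by
    intro n1 n2 n3 n4 n5
    rw [hE5b]
    simp only [LinearMap.coe_sum, Finset.sum_apply, lift.tmul, LinearMap.comp_apply,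
      mhdArgL_apply, cscFunL_apply, cscEArgL_apply, mhd_tmul, csc_tmul, cscE_tmul,
      LinearMap.id_coe, id_eq, LinearMap.llcomp_apply, map_smul, smul_smul, mul_comm]
  -- Step 7: transfer back from TreeB to TreeC
  have step7L : E5b (cD5 B.comul x) =
      ∑ i ∈ sP, ∑ j2 ∈ tP i, ∑ l ∈ tW i, ∑ r2 ∈ tQ i l, ∑ j ∈ sy,
        (B.alpha (mm i l) *
            B.sigma (B.antipode (y1 j)) (B.antipode (l1 i j2)) (l5 i l r2)) •
          B.mul (B.antipode (y2 j)) (B.mul (B.antipode (l2 i j2)) (l4 i l r2)) := by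
    rw [cd5_treeB B.toDualQuasiBialgebra hPW (fun i _ => hl2 i) (fun i _ => hmq i)
      (fun i _ l _ => hl45 i l), map_sum]
    refine Finset.sum_congr rfl fun i _ => ?_
    rw [map_sum]
    refine Finset.sum_congr rfl fun j2 _ => ?_
    rw [map_sum]
    refine Finset.sum_congr rfl fun l _ => ?_
    rw [map_sum]
    exact Finset.sum_congr rfl fun r2 _ => E5b_tmul _ _ _ _ _
  have step7R : E5b (cD5 B.comul x) =
      ∑ i ∈ sx, ∑ q ∈ t i, ∑ r ∈ u i q, ∑ w ∈ v i q r, ∑ j ∈ sy,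
        (B.alpha (m3 i q r w) *
            B.sigma (B.antipode (y1 j)) (B.antipode (X1 i)) (Z i q)) •
          B.mul (B.antipode (y2 j)) (B.mul (B.antipode (m1 i q r)) (m4 i q r w)) := by
    rw [cd5_treeC B.toDualQuasiBialgebra hx hX2 (fun i _ q _ => hm2 i q)
      (fun i _ q _ r _ => hm4 i q r), map_sum]
    refine Finset.sum_congr rfl fun i _ => ?_
    rw [map_sum]
    refine Finset.sum_congr rfl fun q _ => ?_
    rw [map_sum]
    refine Finset.sum_congr rfl fun r _ => ?_
    rw [map_sum]
    exact Finset.sum_congr rfl fun w _ => E5b_tmul _ _ _ _ _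
  -- Step 8: reorder j outward
  have step8 : (∑ i ∈ sx, ∑ q ∈ t i, ∑ r ∈ u i q, ∑ w ∈ v i q r, ∑ j ∈ sy,
      (B.alpha (m3 i q r w) *
          B.sigma (B.antipode (y1 j)) (B.antipode (X1 i)) (Z i q)) •
        B.mul (B.antipode (y2 j)) (B.mul (B.antipode (m1 i q r)) (m4 i q r w))) =
      ∑ i ∈ sx, ∑ q ∈ t i, ∑ j ∈ sy, ∑ r ∈ u i q, ∑ w ∈ v i q r,
        (B.alpha (m3 i q r w) *
            B.sigma (B.antipode (y1 j)) (B.antipode (X1 i)) (Z i q)) •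
          B.mul (B.antipode (y2 j)) (B.mul (B.antipode (m1 i q r)) (m4 i q r w)) := by
    refine Finset.sum_congr rfl fun i _ => Finset.sum_congr rfl fun q _ => ?_
    exact (Finset.sum_congr rfl fun r _ => Finset.sum_comm).trans Finset.sum_comm
  -- Step 9: collapse via the antipode/alpha axiom
  have step9 : (∑ i ∈ sx, ∑ q ∈ t i, ∑ j ∈ sy, ∑ r ∈ u i q, ∑ w ∈ v i q r,
      (B.alpha (m3 i q r w) *
          B.sigma (B.antipode (y1 j)) (B.antipode (X1 i)) (Z i q)) •
        B.mul (B.antipode (y2 j)) (B.mul (B.antipode (m1 i q r)) (m4 i q r w))) =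
      ∑ i ∈ sx, ∑ q ∈ t i, ∑ j ∈ sy,
        (B.sigma (B.antipode (y1 j)) (B.antipode (X1 i)) (Z i q) *
            B.alpha (Mm i q)) • B.antipode (y2 j) := by
    refine Finset.sum_congr rfl fun i _ => Finset.sum_congr rfl fun q hq =>
      Finset.sum_congr rfl fun j _ => ?_
    calc (∑ r ∈ u i q, ∑ w ∈ v i q r,
        (B.alpha (m3 i q r w) *
            B.sigma (B.antipode (y1 j)) (B.antipode (X1 i)) (Z i q)) •
          B.mul (B.antipode (y2 j)) (B.mul (B.antipode (m1 i q r)) (m4 i q r w)))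
        = B.sigma (B.antipode (y1 j)) (B.antipode (X1 i)) (Z i q) •
            (B.mul (B.antipode (y2 j)) (∑ r ∈ u i q, ∑ w ∈ v i q r,
              B.alpha (m3 i q r w) •
                B.mul (B.antipode (m1 i q r)) (m4 i q r w))) := by
          rw [map_sum, Finset.smul_sum]
          refine Finset.sum_congr rfl fun r _ => ?_
          rw [map_sum, Finset.smul_sum]
          refine Finset.sum_congr rfl fun w _ => ?_
          rw [map_smul, smul_smul, mul_comm]
      _ = (B.sigma (B.antipode (y1 j)) (B.antipode (X1 i)) (Z i q) *
            B.alpha (Mm i q)) • B.antipode (y2 j) := by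
          rw [alpha_tree B (Mm i q) (hm2 i q) (fun r _ => hm4 i q r)]
          rw [map_smul, B.mul_one, smul_smul]
  -- Step 10: identify with the Φ₁ side
  have step10 : (∑ j ∈ sy, qR (B.antipode (y1 j)) (B.antipode x) • B.antipode (y2 j)) =
      ∑ i ∈ sx, ∑ q ∈ t i, ∑ j ∈ sy,
        (B.sigma (B.antipode (y1 j)) (B.antipode (X1 i)) (Z i q) *
            B.alpha (Mm i q)) • B.antipode (y2 j) := by
    calc (∑ j ∈ sy, qR (B.antipode (y1 j)) (B.antipode x) • B.antipode (y2 j))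
        = ∑ j ∈ sy, ∑ i ∈ sx, ∑ q ∈ t i,
            (B.sigma (B.antipode (y1 j)) (B.antipode (X1 i)) (Z i q) *
                B.alpha (Mm i q)) • B.antipode (y2 j) := by
          refine Finset.sum_congr rfl fun j _ => ?_
          rw [qR_S B sInv hsInv₁ qR hqR (B.antipode (y1 j)) x hx
            (fun i hi => hX2 i hi), Finset.sum_smul]
          refine Finset.sum_congr rfl fun i _ => ?_
          rw [Finset.sum_smul]
      _ = ∑ i ∈ sx, ∑ q ∈ t i, ∑ j ∈ sy,
            (B.sigma (B.antipode (y1 j)) (B.antipode (X1 i)) (Z i q) *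
                B.alpha (Mm i q)) • B.antipode (y2 j) := by
          exact Finset.sum_comm.trans (Finset.sum_congr rfl fun i _ => Finset.sum_comm)
  rw [step1, step2, ← step3L, step3R, step4, step5, step6, ← step7L, step7R, step8,
    step9, step10]

end M3
end DQH

open DQH in
/-- Lemma 2.2 (2.9): with `U(a,b) = g(a₁,b₁) q^R(s(b₂),s(a₂))`,
one has `U(a,b₁)s(b₂) = s(a₁b₁) U(a₂,b₂) a₃`. -/
theorem U_relation_one {k H : Type} [Field k] [AddCommGroup H] [Module k H]
    (B : DualQuasiHopfAlgebra k H)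
    (sInv : H →ₗ[k] H)
    (hsInv₁ : ∀ a : H, sInv (B.antipode a) = a)
    (hsInv₂ : ∀ a : H, B.antipode (sInv a) = a)
    (qR : H →ₗ[k] H →ₗ[k] k)
    (hqR : ∀ (a b : H) (sb : Finset ℕ) (b1 b2 b3 : ℕ → H),
      cD3 B.comul b = ∑ i ∈ sb, b1 i ⊗ₜ[k] (b2 i ⊗ₜ[k] b3 i) →
      qR a b = ∑ i ∈ sb, B.sigma a (b3 i) (sInv (b1 i)) * B.alpha (sInv (b2 i)))
    (f g : H →ₗ[k] H →ₗ[k] k)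
    (hfg : ∀ (a b : H) (sa sb : Finset ℕ) (a1 a2 b1 b2 : ℕ → H),
      B.comul a = ∑ i ∈ sa, a1 i ⊗ₜ[k] a2 i →
      B.comul b = ∑ j ∈ sb, b1 j ⊗ₜ[k] b2 j →
      ∑ i ∈ sa, ∑ j ∈ sb, f (a1 i) (b1 j) * g (a2 i) (b2 j) = B.counit a * B.counit b)
    (hgf : ∀ (a b : H) (sa sb : Finset ℕ) (a1 a2 b1 b2 : ℕ → H),
      B.comul a = ∑ i ∈ sa, a1 i ⊗ₜ[k] a2 i →
      B.comul b = ∑ j ∈ sb, b1 j ⊗ₜ[k] b2 j →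
      ∑ i ∈ sa, ∑ j ∈ sb, g (a1 i) (b1 j) * f (a2 i) (b2 j) = B.counit a * B.counit b)
    (hTwist : ∀ (a b : H) (sa sb : Finset ℕ) (a1 a2 a3 b1 b2 b3 : ℕ → H),
      cD3 B.comul a = ∑ i ∈ sa, a1 i ⊗ₜ[k] (a2 i ⊗ₜ[k] a3 i) →
      cD3 B.comul b = ∑ j ∈ sb, b1 j ⊗ₜ[k] (b2 j ⊗ₜ[k] b3 j) →
      ∑ i ∈ sa, ∑ j ∈ sb,
          (f (a1 i) (b1 j) * g (a3 i) (b3 j)) • B.antipode (B.mul (a2 i) (b2 j)) =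
        B.mul (B.antipode b) (B.antipode a))
    (nu : H →ₗ[k] H →ₗ[k] H →ₗ[k] H →ₗ[k] k)
    (hnu : ∀ (a b c d : H) (sa sb sc : Finset ℕ) (a1 a2 b1 b2 c1 c2 : ℕ → H),
      B.comul a = ∑ i ∈ sa, a1 i ⊗ₜ[k] a2 i →
      B.comul b = ∑ j ∈ sb, b1 j ⊗ₜ[k] b2 j →
      B.comul c = ∑ l ∈ sc, c1 l ⊗ₜ[k] c2 l →
      nu a b c d = ∑ i ∈ sa, ∑ j ∈ sb, ∑ l ∈ sc,
        B.sigma (a1 i) (b1 j) (c1 l) * B.sigmaInv (B.mul (a2 i) (b2 j)) (c2 l) d)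
    (lam : H →ₗ[k] H →ₗ[k] k)
    (hlam : ∀ (a b : H) (sa sb : Finset ℕ) (a1 a2 a3 b1 b2 b3 : ℕ → H),
      cD3 B.comul a = ∑ i ∈ sa, a1 i ⊗ₜ[k] (a2 i ⊗ₜ[k] a3 i) →
      cD3 B.comul b = ∑ j ∈ sb, b1 j ⊗ₜ[k] (b2 j ⊗ₜ[k] b3 j) →
      lam a b = ∑ i ∈ sa, ∑ j ∈ sb,
        nu (B.antipode (b1 j)) (B.antipode (a1 i)) (a3 i) (b3 j) *
          B.alpha (a2 i) * B.alpha (b2 j))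
    (hf : ∀ (a b : H) (sa sb : Finset ℕ) (a1 a2 a3 a4 a5 b1 b2 b3 b4 b5 : ℕ → H),
      cD5 B.comul a =
        ∑ i ∈ sa, a1 i ⊗ₜ[k] (a2 i ⊗ₜ[k] (a3 i ⊗ₜ[k] (a4 i ⊗ₜ[k] a5 i))) →
      cD5 B.comul b =
        ∑ j ∈ sb, b1 j ⊗ₜ[k] (b2 j ⊗ₜ[k] (b3 j ⊗ₜ[k] (b4 j ⊗ₜ[k] b5 j))) →
      f a b = ∑ i ∈ sa, ∑ j ∈ sb,
        B.sigmaInv (B.mul (B.antipode (b1 j)) (B.antipode (a1 i)))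
            (B.mul (a3 i) (b3 j)) (B.antipode (B.mul (a5 i) (b5 j))) *
          lam (a2 i) (b2 j) * B.beta (B.mul (a4 i) (b4 j)))
    (hf_alpha : ∀ (a b : H) (sa sb : Finset ℕ) (a1 a2 b1 b2 : ℕ → H),
      B.comul a = ∑ i ∈ sa, a1 i ⊗ₜ[k] a2 i →
      B.comul b = ∑ j ∈ sb, b1 j ⊗ₜ[k] b2 j →
      ∑ i ∈ sa, ∑ j ∈ sb, f (a1 i) (b1 j) * B.alpha (B.mul (a2 i) (b2 j)) = lam a b)
    (mu : H →ₗ[k] H →ₗ[k] H →ₗ[k] H →ₗ[k] k)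
    (hmu : ∀ (a b c d : H) (sa sb sc : Finset ℕ) (a1 a2 b1 b2 c1 c2 : ℕ → H),
      B.comul a = ∑ i ∈ sa, a1 i ⊗ₜ[k] a2 i →
      B.comul b = ∑ j ∈ sb, b1 j ⊗ₜ[k] b2 j →
      B.comul c = ∑ l ∈ sc, c1 l ⊗ₜ[k] c2 l →
      mu a b c d = ∑ i ∈ sa, ∑ j ∈ sb, ∑ l ∈ sc,
        B.sigma (B.mul (a1 i) (b1 j)) (c1 l) d * B.sigmaInv (a2 i) (b2 j) (c2 l))
    (chi : H →ₗ[k] H →ₗ[k] k)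
    (hchi : ∀ (a b : H) (sa sb : Finset ℕ) (a1 a2 a3 b1 b2 b3 : ℕ → H),
      cD3 B.comul a = ∑ i ∈ sa, a1 i ⊗ₜ[k] (a2 i ⊗ₜ[k] a3 i) →
      cD3 B.comul b = ∑ j ∈ sb, b1 j ⊗ₜ[k] (b2 j ⊗ₜ[k] b3 j) →
      chi a b = ∑ i ∈ sa, ∑ j ∈ sb,
        mu (a1 i) (b1 j) (B.antipode (b3 j)) (B.antipode (a3 i)) *
          B.beta (a2 i) * B.beta (b2 j))
    (hg : ∀ (a b : H) (sa sb : Finset ℕ) (a1 a2 a3 a4 a5 b1 b2 b3 b4 b5 : ℕ → H),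
      cD5 B.comul a =
        ∑ i ∈ sa, a1 i ⊗ₜ[k] (a2 i ⊗ₜ[k] (a3 i ⊗ₜ[k] (a4 i ⊗ₜ[k] a5 i))) →
      cD5 B.comul b =
        ∑ j ∈ sb, b1 j ⊗ₜ[k] (b2 j ⊗ₜ[k] (b3 j ⊗ₜ[k] (b4 j ⊗ₜ[k] b5 j))) →
      g a b = ∑ i ∈ sa, ∑ j ∈ sb,
        B.sigmaInv (B.antipode (B.mul (a1 i) (b1 j))) (B.mul (a3 i) (b3 j))
            (B.mul (B.antipode (b5 j)) (B.antipode (a5 i))) *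
          chi (a4 i) (b4 j) * B.alpha (B.mul (a2 i) (b2 j)))
    (U : H →ₗ[k] H →ₗ[k] k)
    (hU : ∀ (a b : H) (sa sb : Finset ℕ) (a1 a2 b1 b2 : ℕ → H),
      B.comul a = ∑ i ∈ sa, a1 i ⊗ₜ[k] a2 i →
      B.comul b = ∑ j ∈ sb, b1 j ⊗ₜ[k] b2 j →
      U a b = ∑ i ∈ sa, ∑ j ∈ sb,
        g (a1 i) (b1 j) * qR (B.antipode (b2 j)) (B.antipode (a2 i)))
    :
    ∀ (a b : H) (sa3 sb : Finset ℕ) (a1' a2' a3' b1 b2 : ℕ → H),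
    cD3 B.comul a = ∑ i ∈ sa3, a1' i ⊗ₜ[k] (a2' i ⊗ₜ[k] a3' i) →
    B.comul b = ∑ j ∈ sb, b1 j ⊗ₜ[k] b2 j →
    ∑ j ∈ sb, U a (b1 j) • B.antipode (b2 j) =
      ∑ i ∈ sa3, ∑ j ∈ sb,
        U (a2' i) (b2 j) • B.mul (B.antipode (B.mul (a1' i) (b1 j))) (a3' i) := by

  intro a b sa3 sb a1' a2' a3' b1 b2 hcd3a hb
  classical
  obtain ⟨sA, A1, A2, hA⟩ := rep2 ((B.comul : H →ₗ[k] H ⊗[k] H) a)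
  choose tG G1 G2 hG using fun p => rep2 (B.comul (A2 p))
  choose tC c1 c2 hC using fun p => rep2 (B.comul (A1 p))
  choose tE e1 e2 hE using fun j => rep2 (B.comul (b2 j))
  choose tU uu vv hUV using fun j => rep2 (B.comul (b1 j))
  choose tD d1 d2 hD using fun i => rep2 (B.comul (a2' i))
  choose tH Hm Hz hH using fun p q => rep2 (B.comul (G2 p q))
  -- ===== LHS chain =====
  have L1 : (∑ j ∈ sb, U a (b1 j) • B.antipode (b2 j)) =
      ∑ j ∈ sb, ∑ p ∈ sA, ∑ l ∈ tU j,
        (g (A1 p) (uu j l) * qR (B.antipode (vv j l)) (B.antipode (A2 p))) •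
          B.antipode (b2 j) := by
    refine Finset.sum_congr rfl fun j _ => ?_
    rw [hU a (b1 j) sA (tU j) A1 A2 (uu j) (vv j) hA (hUV j), Finset.sum_smul]
    refine Finset.sum_congr rfl fun p _ => ?_
    rw [Finset.sum_smul]
  have L2 : (∑ j ∈ sb, ∑ p ∈ sA, ∑ l ∈ tU j,
      (g (A1 p) (uu j l) * qR (B.antipode (vv j l)) (B.antipode (A2 p))) •
        B.antipode (b2 j)) =
      ∑ p ∈ sA, ∑ j ∈ sb, ∑ m ∈ tE j,
        (g (A1 p) (b1 j) * qR (B.antipode (e1 j m)) (B.antipode (A2 p))) •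
          B.antipode (e2 j m) := by
    rw [Finset.sum_comm]
    refine Finset.sum_congr rfl fun p _ => ?_
    set E2 : H ⊗[k] (H ⊗[k] H) →ₗ[k] H :=
      csc (g (A1 p)) (csc ((qR.flip (B.antipode (A2 p))) ∘ₗ B.antipode) B.antipode)
      with hE2
    have hv : ∀ n1 n2 n3 : H, E2 (n1 ⊗ₜ[k] (n2 ⊗ₜ[k] n3)) =
        (g (A1 p) n1 * qR (B.antipode n2) (B.antipode (A2 p))) • B.antipode n3 := by
      intro n1 n2 n3
      rw [hE2]
      simp only [csc_tmul, LinearMap.comp_apply, LinearMap.flip_apply, smul_smul]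
    have h1 : E2 (cD3 B.comul b) = ∑ j ∈ sb, ∑ l ∈ tU j,
        (g (A1 p) (uu j l) * qR (B.antipode (vv j l)) (B.antipode (A2 p))) •
          B.antipode (b2 j) := by
      rw [cd3_left B.toDualQuasiBialgebra hb (fun j _ => hUV j), map_sum]
      refine Finset.sum_congr rfl fun j _ => ?_
      rw [map_sum]
      exact Finset.sum_congr rfl fun l _ => hv _ _ _
    have h2 : E2 (cD3 B.comul b) = ∑ j ∈ sb, ∑ m ∈ tE j,
        (g (A1 p) (b1 j) * qR (B.antipode (e1 j m)) (B.antipode (A2 p))) •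
          B.antipode (e2 j m) := by
      rw [cd3_right B.toDualQuasiBialgebra hb (fun j _ => hE j), map_sum]
      refine Finset.sum_congr rfl fun j _ => ?_
      rw [map_sum]
      exact Finset.sum_congr rfl fun m _ => hv _ _ _
    exact h1.symm.trans h2
  have L3 : (∑ p ∈ sA, ∑ j ∈ sb, ∑ m ∈ tE j,
      (g (A1 p) (b1 j) * qR (B.antipode (e1 j m)) (B.antipode (A2 p))) •
        B.antipode (e2 j m)) =
      ∑ p ∈ sA, ∑ j ∈ sb, ∑ q ∈ tG p, ∑ h ∈ tH p q, ∑ m ∈ tE j,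
        (g (A1 p) (b1 j) * qR (B.antipode (e2 j m)) (B.antipode (Hm p q h))) •
          B.mul (B.mul (B.antipode (e1 j m)) (B.antipode (G1 p q))) (Hz p q h) := by
    refine Finset.sum_congr rfl fun p _ => Finset.sum_congr rfl fun j _ => ?_
    calc (∑ m ∈ tE j,
        (g (A1 p) (b1 j) * qR (B.antipode (e1 j m)) (B.antipode (A2 p))) •
          B.antipode (e2 j m))
        = g (A1 p) (b1 j) • ∑ m ∈ tE j,
            qR (B.antipode (e1 j m)) (B.antipode (A2 p)) • B.antipode (e2 j m) := by
          rw [Finset.smul_sum]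
          exact Finset.sum_congr rfl fun m _ => (smul_smul _ _ _).symm
      _ = g (A1 p) (b1 j) • ∑ q ∈ tG p, ∑ h ∈ tH p q, ∑ m ∈ tE j,
            qR (B.antipode (e2 j m)) (B.antipode (Hm p q h)) •
              B.mul (B.mul (B.antipode (e1 j m)) (B.antipode (G1 p q))) (Hz p q h) := by
          rw [M3 B sInv hsInv₁ qR hqR (A2 p) (b2 j) (hE j) (hG p) (fun q _ => hH p q)]
      _ = ∑ q ∈ tG p, ∑ h ∈ tH p q, ∑ m ∈ tE j,
            (g (A1 p) (b1 j) * qR (B.antipode (e2 j m)) (B.antipode (Hm p q h))) •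
              B.mul (B.mul (B.antipode (e1 j m)) (B.antipode (G1 p q))) (Hz p q h) := by
          rw [Finset.smul_sum]
          refine Finset.sum_congr rfl fun q _ => ?_
          rw [Finset.smul_sum]
          refine Finset.sum_congr rfl fun h _ => ?_
          rw [Finset.smul_sum]
          exact Finset.sum_congr rfl fun m _ => smul_smul _ _ _
  -- ===== RHS chain =====
  have R1 : (∑ i ∈ sa3, ∑ j ∈ sb,
      U (a2' i) (b2 j) • B.mul (B.antipode (B.mul (a1' i) (b1 j))) (a3' i)) =
      ∑ i ∈ sa3, ∑ j ∈ sb, ∑ r ∈ tD i, ∑ m ∈ tE j,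
        (g (d1 i r) (e1 j m) * qR (B.antipode (e2 j m)) (B.antipode (d2 i r))) •
          B.mul (B.antipode (B.mul (a1' i) (b1 j))) (a3' i) := by
    refine Finset.sum_congr rfl fun i _ => Finset.sum_congr rfl fun j _ => ?_
    rw [hU (a2' i) (b2 j) (tD i) (tE j) (d1 i) (d2 i) (e1 j) (e2 j) (hD i) (hE j),
      Finset.sum_smul]
    refine Finset.sum_congr rfl fun r _ => ?_
    rw [Finset.sum_smul]
  have R2 : (∑ i ∈ sa3, ∑ j ∈ sb, ∑ r ∈ tD i, ∑ m ∈ tE j,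
      (g (d1 i r) (e1 j m) * qR (B.antipode (e2 j m)) (B.antipode (d2 i r))) •
        B.mul (B.antipode (B.mul (a1' i) (b1 j))) (a3' i)) =
      ∑ i ∈ sa3, ∑ r ∈ tD i, ∑ j ∈ sb, ∑ m ∈ tE j,
        (g (d1 i r) (e1 j m) * qR (B.antipode (e2 j m)) (B.antipode (d2 i r))) •
          B.mul (B.antipode (B.mul (a1' i) (b1 j))) (a3' i) := by
    exact Finset.sum_congr rfl fun i _ => Finset.sum_comm
  -- transfer from the given cD3-presentation to the pairs tree
  set EbarR : H ⊗[k] (H ⊗[k] (H ⊗[k] H)) →ₗ[k] H := ∑ j ∈ sb, ∑ m ∈ tE j,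
    (mhd (B.mul ∘ₗ B.antipode ∘ₗ (B.mul.flip (b1 j)))
      (csc (g.flip (e1 j m))
        (csc ((qR (B.antipode (e2 j m))) ∘ₗ B.antipode) LinearMap.id)) :
      H ⊗[k] (H ⊗[k] (H ⊗[k] H)) →ₗ[k] H) with hEbarR
  have EbarR_tmul : ∀ n1 n2 n3 n4 : H,
      EbarR (n1 ⊗ₜ[k] (n2 ⊗ₜ[k] (n3 ⊗ₜ[k] n4))) =
      ∑ j ∈ sb, ∑ m ∈ tE j,
        (g n2 (e1 j m) * qR (B.antipode (e2 j m)) (B.antipode n3)) •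
          B.mul (B.antipode (B.mul n1 (b1 j))) n4 := by
    intro n1 n2 n3 n4
    rw [hEbarR]
    simp only [LinearMap.coe_sum, Finset.sum_apply, mhd_tmul, csc_tmul,
      LinearMap.comp_apply, LinearMap.flip_apply, LinearMap.id_coe, id_eq, map_smul,
      smul_smul]
  have R3a : EbarR (cD4 B.comul a) =
      ∑ i ∈ sa3, ∑ r ∈ tD i, ∑ j ∈ sb, ∑ m ∈ tE j,
        (g (d1 i r) (e1 j m) * qR (B.antipode (e2 j m)) (B.antipode (d2 i r))) •
          B.mul (B.antipode (B.mul (a1' i) (b1 j))) (a3' i) := by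
    rw [cd4_mid B.toDualQuasiBialgebra hcd3a (fun i _ => hD i), map_sum]
    refine Finset.sum_congr rfl fun i _ => ?_
    rw [map_sum]
    exact Finset.sum_congr rfl fun r _ => EbarR_tmul _ _ _ _
  have R3b : EbarR (cD4 B.comul a) =
      ∑ p ∈ sA, ∑ w ∈ tC p, ∑ q ∈ tG p, ∑ j ∈ sb, ∑ m ∈ tE j,
        (g (c2 p w) (e1 j m) * qR (B.antipode (e2 j m)) (B.antipode (G1 p q))) •
          B.mul (B.antipode (B.mul (c1 p w) (b1 j))) (G2 p q) := by
    rw [cd4_pairs B.toDualQuasiBialgebra hA (fun p _ => hC p) (fun p _ => hG p), map_sum]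
    refine Finset.sum_congr rfl fun p _ => ?_
    rw [map_sum]
    refine Finset.sum_congr rfl fun w _ => ?_
    rw [map_sum]
    exact Finset.sum_congr rfl fun q _ => EbarR_tmul _ _ _ _
  -- reorder to (p, q, j, w, m)
  have R4 : (∑ p ∈ sA, ∑ w ∈ tC p, ∑ q ∈ tG p, ∑ j ∈ sb, ∑ m ∈ tE j,
      (g (c2 p w) (e1 j m) * qR (B.antipode (e2 j m)) (B.antipode (G1 p q))) •
        B.mul (B.antipode (B.mul (c1 p w) (b1 j))) (G2 p q)) =
      ∑ p ∈ sA, ∑ q ∈ tG p, ∑ j ∈ sb, ∑ w ∈ tC p, ∑ m ∈ tE j,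
        (g (c2 p w) (e1 j m) * qR (B.antipode (e2 j m)) (B.antipode (G1 p q))) •
          B.mul (B.antipode (B.mul (c1 p w) (b1 j))) (G2 p q) := by
    refine Finset.sum_congr rfl fun p _ => ?_
    rw [Finset.sum_comm]
    refine Finset.sum_congr rfl fun q _ => ?_
    rw [Finset.sum_comm]
  -- switch the b-tree from right to left, pointwise in (p,q)
  have R5 : (∑ p ∈ sA, ∑ q ∈ tG p, ∑ j ∈ sb, ∑ w ∈ tC p, ∑ m ∈ tE j,
      (g (c2 p w) (e1 j m) * qR (B.antipode (e2 j m)) (B.antipode (G1 p q))) •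
        B.mul (B.antipode (B.mul (c1 p w) (b1 j))) (G2 p q)) =
      ∑ p ∈ sA, ∑ q ∈ tG p, ∑ j ∈ sb, ∑ l ∈ tU j, ∑ w ∈ tC p,
        (g (c2 p w) (vv j l) * qR (B.antipode (b2 j)) (B.antipode (G1 p q))) •
          B.mul (B.antipode (B.mul (c1 p w) (uu j l))) (G2 p q) := by
    refine Finset.sum_congr rfl fun p _ => Finset.sum_congr rfl fun q _ => ?_
    have key : ∀ w, (∑ j ∈ sb, ∑ m ∈ tE j,
        (g (c2 p w) (e1 j m) * qR (B.antipode (e2 j m)) (B.antipode (G1 p q))) •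
          B.mul (B.antipode (B.mul (c1 p w) (b1 j))) (G2 p q)) =
        ∑ j ∈ sb, ∑ l ∈ tU j,
          (g (c2 p w) (vv j l) * qR (B.antipode (b2 j)) (B.antipode (G1 p q))) •
            B.mul (B.antipode (B.mul (c1 p w) (uu j l))) (G2 p q) := by
      intro w
      set E3 : H ⊗[k] (H ⊗[k] H) →ₗ[k] H :=
        mhd (B.mul ∘ₗ B.antipode ∘ₗ (B.mul (c1 p w)))
          (csc (g (c2 p w))
            (LinearMap.smulRight ((qR.flip (B.antipode (G1 p q))) ∘ₗ B.antipode)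
              (G2 p q))) with hE3
      have hv : ∀ n1 n2 n3 : H, E3 (n1 ⊗ₜ[k] (n2 ⊗ₜ[k] n3)) =
          (g (c2 p w) n2 * qR (B.antipode n3) (B.antipode (G1 p q))) •
            B.mul (B.antipode (B.mul (c1 p w) n1)) (G2 p q) := by
        intro n1 n2 n3
        rw [hE3]
        simp only [mhd_tmul, csc_tmul, LinearMap.comp_apply, LinearMap.flip_apply,
          LinearMap.smulRight_apply, map_smul, smul_smul]
      have h1 : E3 (cD3 B.comul b) = ∑ j ∈ sb, ∑ m ∈ tE j,
          (g (c2 p w) (e1 j m) * qR (B.antipode (e2 j m)) (B.antipode (G1 p q))) •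
            B.mul (B.antipode (B.mul (c1 p w) (b1 j))) (G2 p q) := by
        rw [cd3_right B.toDualQuasiBialgebra hb (fun j _ => hE j), map_sum]
        refine Finset.sum_congr rfl fun j _ => ?_
        rw [map_sum]
        exact Finset.sum_congr rfl fun m _ => hv _ _ _
      have h2 : E3 (cD3 B.comul b) = ∑ j ∈ sb, ∑ l ∈ tU j,
          (g (c2 p w) (vv j l) * qR (B.antipode (b2 j)) (B.antipode (G1 p q))) •
            B.mul (B.antipode (B.mul (c1 p w) (uu j l))) (G2 p q) := by
        rw [cd3_left B.toDualQuasiBialgebra hb (fun j _ => hUV j), map_sum]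
        refine Finset.sum_congr rfl fun j _ => ?_
        rw [map_sum]
        exact Finset.sum_congr rfl fun l _ => hv _ _ _
      exact h1.symm.trans h2
    calc (∑ j ∈ sb, ∑ w ∈ tC p, ∑ m ∈ tE j,
        (g (c2 p w) (e1 j m) * qR (B.antipode (e2 j m)) (B.antipode (G1 p q))) •
          B.mul (B.antipode (B.mul (c1 p w) (b1 j))) (G2 p q))
        = ∑ w ∈ tC p, ∑ j ∈ sb, ∑ m ∈ tE j,
            (g (c2 p w) (e1 j m) * qR (B.antipode (e2 j m)) (B.antipode (G1 p q))) •
              B.mul (B.antipode (B.mul (c1 p w) (b1 j))) (G2 p q) := Finset.sum_comm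
      _ = ∑ w ∈ tC p, ∑ j ∈ sb, ∑ l ∈ tU j,
            (g (c2 p w) (vv j l) * qR (B.antipode (b2 j)) (B.antipode (G1 p q))) •
              B.mul (B.antipode (B.mul (c1 p w) (uu j l))) (G2 p q) :=
          Finset.sum_congr rfl fun w _ => key w
      _ = ∑ j ∈ sb, ∑ l ∈ tU j, ∑ w ∈ tC p,
            (g (c2 p w) (vv j l) * qR (B.antipode (b2 j)) (B.antipode (G1 p q))) •
              B.mul (B.antipode (B.mul (c1 p w) (uu j l))) (G2 p q) := by
          rw [Finset.sum_comm]
          exact Finset.sum_congr rfl fun j _ => Finset.sum_comm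
  -- apply the star identity pointwise in (p,q,j)
  have R6 : (∑ p ∈ sA, ∑ q ∈ tG p, ∑ j ∈ sb, ∑ l ∈ tU j, ∑ w ∈ tC p,
      (g (c2 p w) (vv j l) * qR (B.antipode (b2 j)) (B.antipode (G1 p q))) •
        B.mul (B.antipode (B.mul (c1 p w) (uu j l))) (G2 p q)) =
      ∑ p ∈ sA, ∑ q ∈ tG p, ∑ j ∈ sb, ∑ w ∈ tC p, ∑ l ∈ tU j,
        (g (c1 p w) (uu j l) * qR (B.antipode (b2 j)) (B.antipode (G1 p q))) •
          B.mul (B.mul (B.antipode (vv j l)) (B.antipode (c2 p w))) (G2 p q) := by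
    refine Finset.sum_congr rfl fun p _ => Finset.sum_congr rfl fun q _ =>
      Finset.sum_congr rfl fun j _ => ?_
    calc (∑ l ∈ tU j, ∑ w ∈ tC p,
        (g (c2 p w) (vv j l) * qR (B.antipode (b2 j)) (B.antipode (G1 p q))) •
          B.mul (B.antipode (B.mul (c1 p w) (uu j l))) (G2 p q))
        = ∑ w ∈ tC p, ∑ l ∈ tU j,
            (g (c2 p w) (vv j l) * qR (B.antipode (b2 j)) (B.antipode (G1 p q))) •
              B.mul (B.antipode (B.mul (c1 p w) (uu j l))) (G2 p q) := Finset.sum_comm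
      _ = qR (B.antipode (b2 j)) (B.antipode (G1 p q)) •
            (B.mul.flip (G2 p q)) (∑ w ∈ tC p, ∑ l ∈ tU j,
              g (c2 p w) (vv j l) •
                B.antipode (B.mul (c1 p w) (uu j l))) := by
          rw [map_sum, Finset.smul_sum]
          refine Finset.sum_congr rfl fun w _ => ?_
          rw [map_sum, Finset.smul_sum]
          refine Finset.sum_congr rfl fun l _ => ?_
          rw [map_smul, smul_smul, mul_comm, LinearMap.flip_apply]
      _ = qR (B.antipode (b2 j)) (B.antipode (G1 p q)) •
            (B.mul.flip (G2 p q)) (∑ w ∈ tC p, ∑ l ∈ tU j,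
              g (c1 p w) (uu j l) •
                B.mul (B.antipode (vv j l)) (B.antipode (c2 p w))) := by
          rw [star B f g hgf hTwist (A1 p) (b1 j) (hC p) (hUV j)]
      _ = ∑ w ∈ tC p, ∑ l ∈ tU j,
            (g (c1 p w) (uu j l) * qR (B.antipode (b2 j)) (B.antipode (G1 p q))) •
              B.mul (B.mul (B.antipode (vv j l)) (B.antipode (c2 p w))) (G2 p q) := by
          rw [map_sum, Finset.smul_sum]
          refine Finset.sum_congr rfl fun w _ => ?_
          rw [map_sum, Finset.smul_sum]
          refine Finset.sum_congr rfl fun l _ => ?_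
          rw [map_smul, smul_smul, mul_comm, LinearMap.flip_apply]
  -- reorder to (p, w, q, j, l)
  have R7 : (∑ p ∈ sA, ∑ q ∈ tG p, ∑ j ∈ sb, ∑ w ∈ tC p, ∑ l ∈ tU j,
      (g (c1 p w) (uu j l) * qR (B.antipode (b2 j)) (B.antipode (G1 p q))) •
        B.mul (B.mul (B.antipode (vv j l)) (B.antipode (c2 p w))) (G2 p q)) =
      ∑ p ∈ sA, ∑ w ∈ tC p, ∑ q ∈ tG p, ∑ j ∈ sb, ∑ l ∈ tU j,
        (g (c1 p w) (uu j l) * qR (B.antipode (b2 j)) (B.antipode (G1 p q))) •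
          B.mul (B.mul (B.antipode (vv j l)) (B.antipode (c2 p w))) (G2 p q) := by
    refine Finset.sum_congr rfl fun p _ => ?_
    exact (Finset.sum_congr rfl fun q _ => Finset.sum_comm).trans Finset.sum_comm
  -- second a-side transfer: pairs tree to right-comb tree
  set Ebar2 : H ⊗[k] (H ⊗[k] (H ⊗[k] H)) →ₗ[k] H := ∑ j ∈ sb, ∑ l ∈ tU j,
    (csc (g.flip (uu j l))
      (mhd (B.mul ∘ₗ (B.mul (B.antipode (vv j l))) ∘ₗ B.antipode)
        (csc ((qR (B.antipode (b2 j))) ∘ₗ B.antipode) LinearMap.id)) :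
      H ⊗[k] (H ⊗[k] (H ⊗[k] H)) →ₗ[k] H) with hEbar2
  have Ebar2_tmul : ∀ n1 n2 n3 n4 : H,
      Ebar2 (n1 ⊗ₜ[k] (n2 ⊗ₜ[k] (n3 ⊗ₜ[k] n4))) =
      ∑ j ∈ sb, ∑ l ∈ tU j,
        (g n1 (uu j l) * qR (B.antipode (b2 j)) (B.antipode n3)) •
          B.mul (B.mul (B.antipode (vv j l)) (B.antipode n2)) n4 := by
    intro n1 n2 n3 n4
    rw [hEbar2]
    simp only [LinearMap.coe_sum, Finset.sum_apply, csc_tmul, mhd_tmul,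
      LinearMap.comp_apply, LinearMap.flip_apply, LinearMap.id_coe, id_eq, map_smul,
      smul_smul]
  have R8a : Ebar2 (cD4 B.comul a) =
      ∑ p ∈ sA, ∑ w ∈ tC p, ∑ q ∈ tG p, ∑ j ∈ sb, ∑ l ∈ tU j,
        (g (c1 p w) (uu j l) * qR (B.antipode (b2 j)) (B.antipode (G1 p q))) •
          B.mul (B.mul (B.antipode (vv j l)) (B.antipode (c2 p w))) (G2 p q) := by
    rw [cd4_pairs B.toDualQuasiBialgebra hA (fun p _ => hC p) (fun p _ => hG p), map_sum]
    refine Finset.sum_congr rfl fun p _ => ?_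
    rw [map_sum]
    refine Finset.sum_congr rfl fun w _ => ?_
    rw [map_sum]
    exact Finset.sum_congr rfl fun q _ => Ebar2_tmul _ _ _ _
  have R8b : Ebar2 (cD4 B.comul a) =
      ∑ p ∈ sA, ∑ q ∈ tG p, ∑ h ∈ tH p q, ∑ j ∈ sb, ∑ l ∈ tU j,
        (g (A1 p) (uu j l) * qR (B.antipode (b2 j)) (B.antipode (Hm p q h))) •
          B.mul (B.mul (B.antipode (vv j l)) (B.antipode (G1 p q))) (Hz p q h) := by
    rw [cd4_right B.toDualQuasiBialgebra hA (fun p _ => hG p) (fun p _ q _ => hH p q),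
      map_sum]
    refine Finset.sum_congr rfl fun p _ => ?_
    rw [map_sum]
    refine Finset.sum_congr rfl fun q _ => ?_
    rw [map_sum]
    exact Finset.sum_congr rfl fun h _ => Ebar2_tmul _ _ _ _
  -- final b-side switch, pointwise in (p,q,h)
  have R9 : (∑ p ∈ sA, ∑ q ∈ tG p, ∑ h ∈ tH p q, ∑ j ∈ sb, ∑ l ∈ tU j,
      (g (A1 p) (uu j l) * qR (B.antipode (b2 j)) (B.antipode (Hm p q h))) •
        B.mul (B.mul (B.antipode (vv j l)) (B.antipode (G1 p q))) (Hz p q h)) =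
      ∑ p ∈ sA, ∑ q ∈ tG p, ∑ h ∈ tH p q, ∑ j ∈ sb, ∑ m ∈ tE j,
        (g (A1 p) (b1 j) * qR (B.antipode (e2 j m)) (B.antipode (Hm p q h))) •
          B.mul (B.mul (B.antipode (e1 j m)) (B.antipode (G1 p q))) (Hz p q h) := by
    refine Finset.sum_congr rfl fun p _ => Finset.sum_congr rfl fun q _ =>
      Finset.sum_congr rfl fun h _ => ?_
    set E4 : H ⊗[k] (H ⊗[k] H) →ₗ[k] H :=
      csc (g (A1 p))
        (mhd (B.mul ∘ₗ (B.mul.flip (B.antipode (G1 p q))) ∘ₗ B.antipode)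
          (LinearMap.smulRight ((qR.flip (B.antipode (Hm p q h))) ∘ₗ B.antipode)
            (Hz p q h))) with hE4
    have hv : ∀ n1 n2 n3 : H, E4 (n1 ⊗ₜ[k] (n2 ⊗ₜ[k] n3)) =
        (g (A1 p) n1 * qR (B.antipode n3) (B.antipode (Hm p q h))) •
          B.mul (B.mul (B.antipode n2) (B.antipode (G1 p q))) (Hz p q h) := by
      intro n1 n2 n3
      rw [hE4]
      simp only [csc_tmul, mhd_tmul, LinearMap.comp_apply, LinearMap.flip_apply,
        LinearMap.smulRight_apply, map_smul, smul_smul]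
    have h1 : E4 (cD3 B.comul b) = ∑ j ∈ sb, ∑ l ∈ tU j,
        (g (A1 p) (uu j l) * qR (B.antipode (b2 j)) (B.antipode (Hm p q h))) •
          B.mul (B.mul (B.antipode (vv j l)) (B.antipode (G1 p q))) (Hz p q h) := by
      rw [cd3_left B.toDualQuasiBialgebra hb (fun j _ => hUV j), map_sum]
      refine Finset.sum_congr rfl fun j _ => ?_
      rw [map_sum]
      exact Finset.sum_congr rfl fun l _ => hv _ _ _
    have h2 : E4 (cD3 B.comul b) = ∑ j ∈ sb, ∑ m ∈ tE j,
        (g (A1 p) (b1 j) * qR (B.antipode (e2 j m)) (B.antipode (Hm p q h))) •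
          B.mul (B.mul (B.antipode (e1 j m)) (B.antipode (G1 p q))) (Hz p q h) := by
      rw [cd3_right B.toDualQuasiBialgebra hb (fun j _ => hE j), map_sum]
      refine Finset.sum_congr rfl fun j _ => ?_
      rw [map_sum]
      exact Finset.sum_congr rfl fun m _ => hv _ _ _
    exact h1.symm.trans h2
  -- reorder to (p, j, q, h, m)
  have R10 : (∑ p ∈ sA, ∑ q ∈ tG p, ∑ h ∈ tH p q, ∑ j ∈ sb, ∑ m ∈ tE j,
      (g (A1 p) (b1 j) * qR (B.antipode (e2 j m)) (B.antipode (Hm p q h))) •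
        B.mul (B.mul (B.antipode (e1 j m)) (B.antipode (G1 p q))) (Hz p q h)) =
      ∑ p ∈ sA, ∑ j ∈ sb, ∑ q ∈ tG p, ∑ h ∈ tH p q, ∑ m ∈ tE j,
        (g (A1 p) (b1 j) * qR (B.antipode (e2 j m)) (B.antipode (Hm p q h))) •
          B.mul (B.mul (B.antipode (e1 j m)) (B.antipode (G1 p q))) (Hz p q h) := by
    refine Finset.sum_congr rfl fun p _ => ?_
    exact (Finset.sum_congr rfl fun q _ => Finset.sum_comm).trans Finset.sum_comm
  rw [L1, L2, L3, R1, R2, ← R3a, R3b, R4, R5, R6, R7, ← R8a, R8b, R9, R10]
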